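/- arXiv:1710.07785 — 9 statements merged into one kernel-verified Lean document; each statement's English description precedes it below -/
import Mathlib

section
/- A linear code C of length n over R is skew cyclic (σ(C) = C) if and only if its Gray image Ψ(C) is a skew quasi-cyclic code of length 4n over F_q of index 4 (π₄(Ψ(C)) = Ψ(C)). -/
/-- The standard form `a + u*b + v*c + u*v*d` of an element of
`R = F_q + uF_q + vF_q + uvF_q`. -/
def stdForm (F R : Type*) [Field F] [CommRing R] [Algebra F R] (u v : R)
    (x : F × F × F × F) : R :=
  algebraMap F R x.1 + u * algebraMap F R x.2.1 + v * algebraMap F R x.2.2.1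
    + u * v * algebraMap F R x.2.2.2

/-- The Gray map extended to vectors. -/
def grayV {F R : Type*} (Ψ : R → (Fin 4 → F)) {n : ℕ} (x : Fin n → R) :
    Fin 4 × Fin n → F :=
  fun ji => Ψ (x ji.2) ji.1

/-- The skew cyclic shift `σ` with respect to `θ`. -/
def skewShift {R : Type*} (θ : R → R) {n : ℕ} [NeZero n] (x : Fin n → R) : Fin n → R :=
  fun i => θ (x (i - 1))

/-- The index-4 skew quasi-cyclic shift `π₄` on `(F_qⁿ)⁴`, applying the skew cyclic shift
(with Frobenius `x ↦ x^(p^t)`) simultaneously to each of the 4 blocks. -/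
def quasiShift4 {F : Type*} [Monoid F] (p t : ℕ) {n : ℕ} [NeZero n]
    (y : Fin 4 × Fin n → F) : Fin 4 × Fin n → F :=
  fun ji => (y (ji.1, ji.2 - 1)) ^ p ^ t

theorem stmt7 (p m t : ℕ) (hp : p.Prime) (hodd : p ≠ 2) (hm : 0 < m)
    (ht : 0 < t) (htm : t ∣ m)
    (F : Type*) [Field F] [Fintype F] (hF : Fintype.card F = p ^ m)
    (R : Type*) [CommRing R] [Algebra F R] (u v : R)
    (hu : u * u = u) (hv : v * v = v)
    (hbij : Function.Bijective (stdForm F R u v))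
    (θ : R → R)
    (hθ : ∀ a b c d : F, θ (stdForm F R u v (a, b, c, d)) =
      stdForm F R u v (a ^ p ^ t, b ^ p ^ t, c ^ p ^ t, d ^ p ^ t))
    (Ψ : R → (Fin 4 → F))
    (hΨ : ∀ a b c d : F,
      Ψ (stdForm F R u v (a, b, c, d)) = ![a, a + b, a + c, a + b + c + d])
    (n : ℕ) [NeZero n] :
    ∀ C : Submodule R (Fin n → R),
      skewShift θ '' (C : Set (Fin n → R)) = C ↔
        quasiShift4 p t '' (grayV Ψ '' (C : Set (Fin n → R))) =
          grayV Ψ '' (C : Set (Fin n → R)) := by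
  intro C
  -- characteristic p
  have hchar : CharP F p := by
    obtain ⟨q, hq⟩ := CharP.exists F
    haveI := hq
    have hqp : q.Prime := CharP.char_is_prime F q
    obtain ⟨k, hk, hcard⟩ := FiniteField.card F q
    have hd : q ∣ p ^ m := by
      rw [← hF, hcard]; exact dvd_pow_self q k.2.ne'
    have := (Nat.prime_dvd_prime_iff_eq hqp hp).mp (Nat.Prime.dvd_of_dvd_pow hqp hd)
    rwa [this] at hq
  haveI := hchar
  haveI : Fact p.Prime := ⟨hp⟩
  -- additivity of Frobenius
  have hfrob : ∀ a b : F, (a + b) ^ p ^ t = a ^ p ^ t + b ^ p ^ t := fun a b =>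
    add_pow_char_pow a b p t
  -- injectivity of Ψ
  have hΨinj : Function.Injective Ψ := by
    intro r r' h
    obtain ⟨⟨a, b, c, d⟩, rfl⟩ := hbij.2 r
    obtain ⟨⟨a', b', c', d'⟩, rfl⟩ := hbij.2 r'
    rw [hΨ, hΨ] at h
    have h0 := congrFun h 0
    have h1 := congrFun h 1
    have h2 := congrFun h 2
    have h3 := congrFun h 3
    simp only [Matrix.cons_val_zero, Matrix.cons_val_one, Matrix.head_cons,
      Matrix.cons_val_two, Matrix.tail_cons, Matrix.cons_val_three] at h0 h1 h2 h3
    obtain rfl : a = a' := h0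
    obtain rfl : b = b' := by linear_combination h1
    obtain rfl : c = c' := by linear_combination h2
    obtain rfl : d = d' := by linear_combination h3
    rfl
  have hginj : Function.Injective (grayV Ψ (n := n)) := by
    intro x y h
    funext i
    apply hΨinj
    funext j
    exact congrFun h (j, i)
  -- key commutation: Ψ (θ r) j = (Ψ r j) ^ p ^ t
  have hkey : ∀ (r : R) (j : Fin 4), Ψ (θ r) j = (Ψ r j) ^ p ^ t := by
    intro r j
    obtain ⟨⟨a, b, c, d⟩, rfl⟩ := hbij.2 r
    rw [hθ, hΨ, hΨ]
    fin_cases j <;>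
      simp [hfrob, Matrix.cons_val_zero, Matrix.cons_val_one, Matrix.head_cons]
  have hcomm : (fun x : Fin n → R => quasiShift4 p t (grayV Ψ x)) =
      (fun x => grayV Ψ (skewShift θ x)) := by
    funext x ji
    simp only [quasiShift4, grayV, skewShift]
    exact (hkey (x (ji.2 - 1)) ji.1).symm
  have himg : ∀ S : Set (Fin n → R),
      quasiShift4 p t '' (grayV Ψ '' S) = grayV Ψ '' (skewShift θ '' S) := by
    intro S
    rw [← Set.image_comp, ← Set.image_comp]
    exact congrArg (· '' S) hcomm
  constructor
  · intro h
    rw [himg, h]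
  · intro h
    rw [himg] at h
    exact Set.image_injective.mpr hginj h
end

section
/- If the automorphism θ_t has order 3, then for every r ∈ Rⁿ the permuted Gray map Ψ_π satisfies Ψ_π(σ(r)) = σ'⁴(Ψ_π(r)), where σ is the skew cyclic shift on Rⁿ and σ' is the skew cyclic shift on F_q^{4n}. -/
/-- The permuted Gray map `Ψ_π : Rⁿ → F_q^{4n}`, interleaving the four Gray components
of each coordinate (coordinate `i` occupies positions `4i, 4i+1, 4i+2, 4i+3`). -/
def grayPerm {F R : Type*} (Ψ : R → (Fin 4 → F)) {n : ℕ} (x : Fin n → R)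
    (k : Fin (4 * n)) : F :=
  Ψ (x ⟨(k : ℕ) / 4, by omega⟩) ⟨(k : ℕ) % 4, by omega⟩

/-- The skew cyclic shift `σ'` on `F_q^{4n}` with Frobenius `x ↦ x^(p^t)`. -/
def skewShiftF {F : Type*} [Monoid F] (p t : ℕ) {N : ℕ} [NeZero N]
    (y : Fin N → F) : Fin N → F :=
  fun k => (y (k - 1)) ^ p ^ t

lemma stmt8_idx (n k : ℕ) (hn : 0 < n) (hk : k < 4 * n) :
    ((4 * n - 4 % (4 * n) + k) % (4 * n)) % 4 = k % 4 ∧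
    ((4 * n - 4 % (4 * n) + k) % (4 * n)) / 4 = (n - 1 % n + k / 4) % n := by
  rcases Nat.eq_or_lt_of_le hn with h1 | h2
  · subst h1; simp at hk ⊢; omega
  · have h4 : (4 : ℕ) % (4 * n) = 4 := Nat.mod_eq_of_lt (by omega)
    have h1n : 1 % n = 1 := Nat.mod_eq_of_lt (by omega)
    rw [h4, h1n]
    have e1 : (4 * n - 4 + k) % (4 * n) = if k < 4 then 4 * n - 4 + k else k - 4 := by
      split
      · exact Nat.mod_eq_of_lt (by omega)
      · rw [show 4 * n - 4 + k = (k - 4) + 4 * n by omega, Nat.add_mod_right]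
        exact Nat.mod_eq_of_lt (by omega)
    have e2 : (n - 1 + k / 4) % n = if k < 4 then n - 1 else k / 4 - 1 := by
      have hd : k / 4 < n := by omega
      split
      · have : k / 4 = 0 := by omega
        rw [this]; exact Nat.mod_eq_of_lt (by omega)
      · have : k / 4 ≥ 1 := by omega
        rw [show n - 1 + k / 4 = (k / 4 - 1) + n by omega, Nat.add_mod_right]
        exact Nat.mod_eq_of_lt (by omega)
    rw [e1, e2]
    split <;> omega

lemma stmt8_charF (p m : ℕ) (F : Type*) [Field F] [Fintype F]
    (hp : p.Prime) (hF : Fintype.card F = p ^ m) : CharP F p := by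
  obtain ⟨q, hq⟩ := CharP.exists F
  haveI := hq
  obtain ⟨k, hk, hcard⟩ := FiniteField.card F q
  have hdvd : q ∣ p ^ m := by
    rw [← hF, hcard]; exact dvd_pow_self q k.2.ne'
  have := Nat.Prime.dvd_of_dvd_pow hk hdvd
  have : q = p := (Nat.prime_dvd_prime_iff_eq hk hp).mp this
  rwa [← this]

lemma stmt8_frob4 (p m t : ℕ) (F : Type*) [Field F] [Fintype F]
    (hord3 : m = 3 * t) (hF : Fintype.card F = p ^ m) (a : F) :
    (((a ^ p ^ t) ^ p ^ t) ^ p ^ t) ^ p ^ t = a ^ p ^ t := by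
  rw [← pow_mul, ← pow_mul, ← pow_mul, ← pow_add, ← pow_add, ← pow_add]
  rw [show t + (t + (t + t)) = m + t by omega, pow_add, pow_mul, ← hF,
    FiniteField.pow_card]

theorem stmt8 (p m t : ℕ) (hp : p.Prime) (hodd : p ≠ 2)
    (ht : 0 < t) (hord3 : m = 3 * t)
    (F : Type*) [Field F] [Fintype F] (hF : Fintype.card F = p ^ m)
    (R : Type*) [CommRing R] [Algebra F R] (u v : R)
    (hu : u * u = u) (hv : v * v = v)
    (hbij : Function.Bijective (stdForm F R u v))
    (θ : R → R)
    (hθ : ∀ a b c d : F, θ (stdForm F R u v (a, b, c, d)) =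
      stdForm F R u v (a ^ p ^ t, b ^ p ^ t, c ^ p ^ t, d ^ p ^ t))
    (Ψ : R → (Fin 4 → F))
    (hΨ : ∀ a b c d : F,
      Ψ (stdForm F R u v (a, b, c, d)) = ![a, a + b, a + c, a + b + c + d])
    (n : ℕ) [NeZero n] [NeZero (4 * n)] :
    ∀ x : Fin n → R,
      grayPerm Ψ (skewShift θ x) = (skewShiftF p t (N := 4 * n))^[4] (grayPerm Ψ x) := by
  haveI : CharP F p := stmt8_charF p m F hp hF
  haveI : Fact p.Prime := ⟨hp⟩
  have key : ∀ (r : R) (j : Fin 4), Ψ (θ r) j = (Ψ r j) ^ p ^ t := by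
    intro r j
    obtain ⟨⟨a, b, c, d⟩, rfl⟩ := hbij.2 r
    rw [show ((a, b, c, d) : F × F × F × F) = (a, b, c, d) from rfl, hθ a b c d,
      hΨ, hΨ]
    fin_cases j <;> simp [add_pow_char_pow]
  intro x
  funext k
  have hn : 0 < n := Nat.pos_of_ne_zero (NeZero.ne n)
  have hiter : ∀ y : Fin (4 * n) → F,
      (skewShiftF p t)^[4] y k = (((y (k - 4) ^ p ^ t) ^ p ^ t) ^ p ^ t) ^ p ^ t := by
    intro y
    show skewShiftF p t (skewShiftF p t (skewShiftF p t (skewShiftF p t y))) k = _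
    simp only [skewShiftF]
    rw [show k - 1 - 1 - 1 - 1 = k - 4 from by open Fin.CommRing in ring]
  rw [hiter]
  have h1 : ∀ i : Fin n, ((i - 1 : Fin n) : ℕ) = (n - 1 % n + (i : ℕ)) % n := by
    intro i
    rw [Fin.sub_def]
    rfl
  have hval : ((k - 4 : Fin (4 * n)) : ℕ) = (4 * n - 4 % (4 * n) + (k : ℕ)) % (4 * n) := by
    rw [Fin.sub_def]
    rfl
  obtain ⟨hmod, hdiv⟩ := stmt8_idx n (k : ℕ) hn k.2
  have e1 : (⟨((k - 4 : Fin (4 * n)) : ℕ) / 4, by omega⟩ : Fin n)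
      = (⟨(k : ℕ) / 4, by omega⟩ : Fin n) - 1 := by
    apply Fin.ext
    rw [h1]
    show ((k - 4 : Fin (4 * n)) : ℕ) / 4 = (n - 1 % n + (k : ℕ) / 4) % n
    rw [hval]
    exact hdiv
  have e2 : (⟨((k - 4 : Fin (4 * n)) : ℕ) % 4, by omega⟩ : Fin 4)
      = (⟨(k : ℕ) % 4, by omega⟩ : Fin 4) := by
    apply Fin.ext
    show ((k - 4 : Fin (4 * n)) : ℕ) % 4 = (k : ℕ) % 4
    rw [hval]
    exact hmod
  simp only [grayPerm, skewShift]
  rw [key, e1, e2, stmt8_frob4 p m t F hord3 hF]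
end

section
/- Let C = (1-u-v+uv)C₁ ⊕ (u-uv)C₂ ⊕ (v-uv)C₃ ⊕ uvC₄ be a linear code of length n over R, where C₁, C₂, C₃, C₄ are linear codes of length n over F_q. Then C is a skew cyclic code over R (with respect to θ_t) if and only if C₁, C₂, C₃, C₄ are all skew cyclic codes over F_q (with respect to the Frobenius x ↦ x^{p^t}). -/
/-- The code `e₁C₁ ⊕ e₂C₂ ⊕ e₃C₃ ⊕ e₄C₄` over `R`, where `e₁ = 1-u-v+uv`, `e₂ = u-uv`,
`e₃ = v-uv`, `e₄ = uv`. -/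
def combSet (F R : Type*) [Field F] [CommRing R] [Algebra F R] (u v : R) {n : ℕ}
    (C₁ C₂ C₃ C₄ : Set (Fin n → F)) : Set (Fin n → R) :=
  {x | ∃ a ∈ C₁, ∃ b ∈ C₂, ∃ c ∈ C₃, ∃ d ∈ C₄, x = fun i =>
    (1 - u - v + u * v) * algebraMap F R (a i) + (u - u * v) * algebraMap F R (b i)
      + (v - u * v) * algebraMap F R (c i) + u * v * algebraMap F R (d i)}

section Aux

variable {F R : Type*} [Field F] [CommRing R] [Algebra F R] (u v : R)

/-- The element `e₁a + e₂b + e₃c + e₄d`. -/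
def combElem (a b c d : F) : R :=
  (1 - u - v + u * v) * algebraMap F R a + (u - u * v) * algebraMap F R b
    + (v - u * v) * algebraMap F R c + u * v * algebraMap F R d

lemma combElem_eq_stdForm (a b c d : F) :
    combElem u v a b c d = stdForm F R u v (a, b - a, c - a, a - b - c + d) := by
  simp only [combElem, stdForm, map_sub, map_add]
  ring

lemma combElem_inj (hbij : Function.Bijective (stdForm F R u v))
    {a b c d a' b' c' d' : F}
    (h : combElem u v a b c d = combElem u v a' b' c' d') :
    a = a' ∧ b = b' ∧ c = c' ∧ d = d' := by
  rw [combElem_eq_stdForm, combElem_eq_stdForm] at h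
  have := hbij.injective h
  simp only [Prod.mk.injEq] at this
  obtain ⟨h1, h2, h3, h4⟩ := this
  subst h1
  have hb : b = b' := sub_left_injective h2
  have hc : c = c' := sub_left_injective h3
  subst hb; subst hc
  exact ⟨rfl, rfl, rfl, by linear_combination h4⟩

/-- The vector whose `i`-th entry is `e₁(a i) + e₂(b i) + e₃(c i) + e₄(d i)`. -/
def combVec {n : ℕ} (a b c d : Fin n → F) : Fin n → R :=
  fun i => combElem u v (a i) (b i) (c i) (d i)

lemma mem_combSet_iff {n : ℕ} {S₁ S₂ S₃ S₄ : Set (Fin n → F)} {x : Fin n → R} :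
    x ∈ combSet F R u v S₁ S₂ S₃ S₄ ↔
      ∃ a ∈ S₁, ∃ b ∈ S₂, ∃ c ∈ S₃, ∃ d ∈ S₄, x = combVec u v a b c d :=
  Iff.rfl

lemma combVec_mem_iff (hbij : Function.Bijective (stdForm F R u v))
    {n : ℕ} {S₁ S₂ S₃ S₄ : Set (Fin n → F)} {a b c d : Fin n → F} :
    combVec u v a b c d ∈ combSet F R u v S₁ S₂ S₃ S₄ ↔
      a ∈ S₁ ∧ b ∈ S₂ ∧ c ∈ S₃ ∧ d ∈ S₄ := by
  constructor
  · rintro ⟨a', ha', b', hb', c', hc', d', hd', hx⟩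
    have key : ∀ i, a i = a' i ∧ b i = b' i ∧ c i = c' i ∧ d i = d' i := fun i =>
      combElem_inj u v hbij (congrFun hx i)
    have ea : a = a' := funext fun i => (key i).1
    have eb : b = b' := funext fun i => (key i).2.1
    have ec : c = c' := funext fun i => (key i).2.2.1
    have ed : d = d' := funext fun i => (key i).2.2.2
    rw [ea, eb, ec, ed]
    exact ⟨ha', hb', hc', hd'⟩
  · rintro ⟨ha, hb, hc, hd⟩
    exact ⟨a, ha, b, hb, c, hc, d, hd, rfl⟩

lemma combSet_eq_iff (hbij : Function.Bijective (stdForm F R u v))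
    {n : ℕ} {T₁ T₂ T₃ T₄ S₁ S₂ S₃ S₄ : Set (Fin n → F)}
    (hT₁ : (0 : Fin n → F) ∈ T₁) (hT₂ : (0 : Fin n → F) ∈ T₂)
    (hT₃ : (0 : Fin n → F) ∈ T₃) (hT₄ : (0 : Fin n → F) ∈ T₄)
    (hS₁ : (0 : Fin n → F) ∈ S₁) (hS₂ : (0 : Fin n → F) ∈ S₂)
    (hS₃ : (0 : Fin n → F) ∈ S₃) (hS₄ : (0 : Fin n → F) ∈ S₄) :
    combSet F R u v T₁ T₂ T₃ T₄ = combSet F R u v S₁ S₂ S₃ S₄ ↔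
      T₁ = S₁ ∧ T₂ = S₂ ∧ T₃ = S₃ ∧ T₄ = S₄ := by
  constructor
  · intro h
    refine ⟨Set.ext fun a => ?_, Set.ext fun b => ?_, Set.ext fun c => ?_,
      Set.ext fun d => ?_⟩
    · have := fun (hmem : a ∈ T₁) =>
        (combVec_mem_iff u v hbij (a := a) (b := 0) (c := 0) (d := 0)
          (S₁ := S₁) (S₂ := S₂) (S₃ := S₃) (S₄ := S₄)).mp
          (h ▸ (combVec_mem_iff u v hbij).mpr ⟨hmem, hT₂, hT₃, hT₄⟩)
      have that := fun (hmem : a ∈ S₁) =>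
        (combVec_mem_iff u v hbij (a := a) (b := 0) (c := 0) (d := 0)
          (S₁ := T₁) (S₂ := T₂) (S₃ := T₃) (S₄ := T₄)).mp
          (h ▸ (combVec_mem_iff u v hbij).mpr ⟨hmem, hS₂, hS₃, hS₄⟩)
      exact ⟨fun hm => (this hm).1, fun hm => (that hm).1⟩
    · have := fun (hmem : b ∈ T₂) =>
        (combVec_mem_iff u v hbij (a := 0) (b := b) (c := 0) (d := 0)
          (S₁ := S₁) (S₂ := S₂) (S₃ := S₃) (S₄ := S₄)).mp
          (h ▸ (combVec_mem_iff u v hbij).mpr ⟨hT₁, hmem, hT₃, hT₄⟩)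
      have that := fun (hmem : b ∈ S₂) =>
        (combVec_mem_iff u v hbij (a := 0) (b := b) (c := 0) (d := 0)
          (S₁ := T₁) (S₂ := T₂) (S₃ := T₃) (S₄ := T₄)).mp
          (h ▸ (combVec_mem_iff u v hbij).mpr ⟨hS₁, hmem, hS₃, hS₄⟩)
      exact ⟨fun hm => (this hm).2.1, fun hm => (that hm).2.1⟩
    · have := fun (hmem : c ∈ T₃) =>
        (combVec_mem_iff u v hbij (a := 0) (b := 0) (c := c) (d := 0)
          (S₁ := S₁) (S₂ := S₂) (S₃ := S₃) (S₄ := S₄)).mp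
          (h ▸ (combVec_mem_iff u v hbij).mpr ⟨hT₁, hT₂, hmem, hT₄⟩)
      have that := fun (hmem : c ∈ S₃) =>
        (combVec_mem_iff u v hbij (a := 0) (b := 0) (c := c) (d := 0)
          (S₁ := T₁) (S₂ := T₂) (S₃ := T₃) (S₄ := T₄)).mp
          (h ▸ (combVec_mem_iff u v hbij).mpr ⟨hS₁, hS₂, hmem, hS₄⟩)
      exact ⟨fun hm => (this hm).2.2.1, fun hm => (that hm).2.2.1⟩
    · have := fun (hmem : d ∈ T₄) =>
        (combVec_mem_iff u v hbij (a := 0) (b := 0) (c := 0) (d := d)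
          (S₁ := S₁) (S₂ := S₂) (S₃ := S₃) (S₄ := S₄)).mp
          (h ▸ (combVec_mem_iff u v hbij).mpr ⟨hT₁, hT₂, hT₃, hmem⟩)
      have that := fun (hmem : d ∈ S₄) =>
        (combVec_mem_iff u v hbij (a := 0) (b := 0) (c := 0) (d := d)
          (S₁ := T₁) (S₂ := T₂) (S₃ := T₃) (S₄ := T₄)).mp
          (h ▸ (combVec_mem_iff u v hbij).mpr ⟨hS₁, hS₂, hS₃, hmem⟩)
      exact ⟨fun hm => (this hm).2.2.2, fun hm => (that hm).2.2.2⟩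
  · rintro ⟨h1, h2, h3, h4⟩
    rw [h1, h2, h3, h4]

end Aux

theorem stmt9 (p m t : ℕ) (hp : p.Prime) (hodd : p ≠ 2) (ht : 0 < t) (htm : t ∣ m)
    (F : Type*) [Field F] [Fintype F] (hF : Fintype.card F = p ^ m)
    (R : Type*) [CommRing R] [Algebra F R] (u v : R)
    (hu : u * u = u) (hv : v * v = v)
    (hbij : Function.Bijective (stdForm F R u v))
    (θ : R → R)
    (hθ : ∀ a b c d : F, θ (stdForm F R u v (a, b, c, d)) =
      stdForm F R u v (a ^ p ^ t, b ^ p ^ t, c ^ p ^ t, d ^ p ^ t))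
    (n : ℕ) [NeZero n]
    (C : Submodule R (Fin n → R)) (C₁ C₂ C₃ C₄ : Submodule F (Fin n → F))
    (hC : (C : Set (Fin n → R)) = combSet F R u v (C₁ : Set (Fin n → F)) C₂ C₃ C₄) :
    skewShift θ '' (C : Set (Fin n → R)) = C ↔
      (skewShift (fun a : F => a ^ p ^ t) '' (C₁ : Set (Fin n → F)) = C₁ ∧
       skewShift (fun a : F => a ^ p ^ t) '' (C₂ : Set (Fin n → F)) = C₂ ∧
       skewShift (fun a : F => a ^ p ^ t) '' (C₃ : Set (Fin n → F)) = C₃ ∧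
       skewShift (fun a : F => a ^ p ^ t) '' (C₄ : Set (Fin n → F)) = C₄) := by
  haveI : Fact p.Prime := ⟨hp⟩
  haveI hchar : CharP F p := by
    obtain ⟨q, hq⟩ := CharP.exists F
    haveI := hq
    obtain ⟨k, hqp, hcard⟩ := FiniteField.card F q
    have hdvd : q ∣ p ^ m := by rw [← hF, hcard]; exact dvd_pow_self q k.2.ne'
    have hqpeq : q = p :=
      (Nat.prime_dvd_prime_iff_eq hqp hp).mp (hqp.dvd_of_dvd_pow hdvd)
    rwa [hqpeq] at hq
  set σ : (Fin n → F) → (Fin n → F) := skewShift (fun a : F => a ^ p ^ t) with hσ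
  -- θ on combElem
  have hθc : ∀ a b c d : F, θ (combElem u v a b c d) =
      combElem u v (a ^ p ^ t) (b ^ p ^ t) (c ^ p ^ t) (d ^ p ^ t) := by
    intro a b c d
    rw [combElem_eq_stdForm, hθ, combElem_eq_stdForm]
    congr 1
    simp only [Prod.mk.injEq]
    refine ⟨trivial, sub_pow_char_pow .., sub_pow_char_pow .., ?_⟩
    rw [show a - b - c + d = (a - b) + (d - c) by ring, add_pow_char_pow,
      sub_pow_char_pow, sub_pow_char_pow]
    ring
  -- skewShift of a combVec
  have hshift : ∀ a b c d : Fin n → F,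
      skewShift θ (combVec u v a b c d) = combVec u v (σ a) (σ b) (σ c) (σ d) := by
    intro a b c d
    funext i
    exact hθc (a (i - 1)) (b (i - 1)) (c (i - 1)) (d (i - 1))
  -- image of combSet under skewShift
  have himg : skewShift θ '' combSet F R u v (C₁ : Set (Fin n → F)) C₂ C₃ C₄ =
      combSet F R u v (σ '' (C₁ : Set (Fin n → F))) (σ '' (C₂ : Set (Fin n → F)))
        (σ '' (C₃ : Set (Fin n → F))) (σ '' (C₄ : Set (Fin n → F))) := by
    ext x
    constructor
    · rintro ⟨y, ⟨a, ha, b, hb, c, hc, d, hd, rfl⟩, rfl⟩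
      exact ⟨σ a, ⟨a, ha, rfl⟩, σ b, ⟨b, hb, rfl⟩, σ c, ⟨c, hc, rfl⟩,
        σ d, ⟨d, hd, rfl⟩, hshift a b c d⟩
    · rintro ⟨_, ⟨a, ha, rfl⟩, _, ⟨b, hb, rfl⟩, _, ⟨c, hc, rfl⟩, _, ⟨d, hd, rfl⟩, rfl⟩
      refine ⟨combVec u v a b c d, ⟨a, ha, b, hb, c, hc, d, hd, rfl⟩, ?_⟩
      funext i
      exact hθc (a (i - 1)) (b (i - 1)) (c (i - 1)) (d (i - 1))
  have hσ0 : σ 0 = 0 := by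
    funext i
    simp [hσ, skewShift, zero_pow (pow_ne_zero t hp.pos.ne')]
  rw [hC, himg]
  exact combSet_eq_iff u v hbij
    ⟨0, C₁.zero_mem, hσ0⟩ ⟨0, C₂.zero_mem, hσ0⟩ ⟨0, C₃.zero_mem, hσ0⟩ ⟨0, C₄.zero_mem, hσ0⟩
    C₁.zero_mem C₂.zero_mem C₃.zero_mem C₄.zero_mem
end

section
/- If C = e₁C₁ ⊕ e₂C₂ ⊕ e₃C₃ ⊕ e₄C₄ is a linear code over R with C₁,...,C₄ linear codes over F_q, then the dual code satisfies C^⊥ = e₁C₁^⊥ ⊕ e₂C₂^⊥ ⊕ e₃C₃^⊥ ⊕ e₄C₄^⊥; moreover C is self-dual if and only if each Cᵢ is self-dual. -/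
/-- The dual of a code with respect to the standard inner product `x·c = Σ xᵢcᵢ`. -/
def dualSet {S : Type*} [CommRing S] {n : ℕ} (C : Set (Fin n → S)) : Set (Fin n → S) :=
  {x | ∀ c ∈ C, ∑ i, x i * c i = 0}

section Aux

variable {F R : Type*} [Field F] [CommRing R] [Algebra F R] (u v : R)

/-- The idempotent decomposition form `e₁a + e₂b + e₃c + e₄d`. -/
def eForm (x : F × F × F × F) : R :=
  (1 - u - v + u * v) * algebraMap F R x.1 + (u - u * v) * algebraMap F R x.2.1
    + (v - u * v) * algebraMap F R x.2.2.1 + u * v * algebraMap F R x.2.2.2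

lemma eForm_eq_std (x : F × F × F × F) :
    eForm u v x = stdForm F R u v
      (x.1, x.2.1 - x.1, x.2.2.1 - x.1, x.1 - x.2.1 - x.2.2.1 + x.2.2.2) := by
  obtain ⟨a, b, c, d⟩ := x
  simp only [eForm, stdForm, map_sub, map_add]
  ring

lemma eForm_bij (hbij : Function.Bijective (stdForm F R u v)) :
    Function.Bijective (eForm u v : F × F × F × F → R) := by
  constructor
  · intro x y hxy
    rw [eForm_eq_std, eForm_eq_std] at hxy
    have h := hbij.1 hxy
    obtain ⟨a, b, c, d⟩ := x; obtain ⟨a', b', c', d'⟩ := y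
    simp only [Prod.mk.injEq] at h
    obtain ⟨h1, h2, h3, h4⟩ := h
    subst h1
    have hb : b = b' := by linear_combination h2
    have hc : c = c' := by linear_combination h3
    subst hb; subst hc
    have hd : d = d' := by linear_combination h4
    subst hd; rfl
  · intro r
    obtain ⟨⟨s₁, s₂, s₃, s₄⟩, hs⟩ := hbij.2 r
    refine ⟨(s₁, s₁ + s₂, s₁ + s₃, s₁ + s₂ + s₃ + s₄), ?_⟩
    rw [eForm_eq_std]
    convert hs using 2 <;> ring

lemma eForm_zero : eForm u v ((0 : F), 0, 0, 0) = 0 := by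
  simp [eForm]

lemma eForm_add (a b c d a' b' c' d' : F) :
    eForm u v (a + a', b + b', c + c', d + d') =
      eForm u v (a, b, c, d) + eForm u v (a', b', c', d') := by
  simp only [eForm, map_add]
  ring

lemma eForm_mul (hu : u * u = u) (hv : v * v = v) (x y : F × F × F × F) :
    eForm u v x * eForm u v y =
      eForm u v (x.1 * y.1, x.2.1 * y.2.1, x.2.2.1 * y.2.2.1, x.2.2.2 * y.2.2.2) := by
  obtain ⟨a1, a2, a3, a4⟩ := x; obtain ⟨b1, b2, b3, b4⟩ := y
  simp only [eForm, map_mul]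
  set A1 := algebraMap F R a1; set A2 := algebraMap F R a2
  set A3 := algebraMap F R a3; set A4 := algebraMap F R a4
  set B1 := algebraMap F R b1; set B2 := algebraMap F R b2
  set B3 := algebraMap F R b3; set B4 := algebraMap F R b4
  linear_combination
    (v*v*(A1-A2-A3+A4)*(B1-B2-B3+B4)
      - v*((A1-A2)*(2*B1-2*B2-B3+B4) - (A3-A4)*(B1-B2))
      + (A1-A2)*(B1-B2)) * hu
    + ((1-u)*(A1-A3)*(B1-B3) + u*(A2-A4)*(B2-B4)) * hv

lemma eForm_sum {n : ℕ} (A B C D : Fin n → F) :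
    ∑ i, eForm u v (A i, B i, C i, D i) =
      eForm u v (∑ i, A i, ∑ i, B i, ∑ i, C i, ∑ i, D i) := by
  classical
  induction (Finset.univ : Finset (Fin n)) using Finset.induction_on with
  | empty => simpa using (eForm_zero u v (R := R)).symm
  | insert _ _ h ih =>
      rw [Finset.sum_insert h, Finset.sum_insert h, Finset.sum_insert h,
        Finset.sum_insert h, Finset.sum_insert h, eForm_add, ih]

lemma eForm_tuple_inj (hbij : Function.Bijective (stdForm F R u v))
    {a b c d a' b' c' d' : F}
    (h : eForm u v (a, b, c, d) = eForm u v (a', b', c', d')) :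
    a = a' ∧ b = b' ∧ c = c' ∧ d = d' := by
  have := (eForm_bij u v hbij).1 h
  simp only [Prod.mk.injEq] at this
  exact this

/-- Membership of an `eForm`-vector in a `combSet`. -/
lemma mem_combSet_iff_s10 (hbij : Function.Bijective (stdForm F R u v)) {n : ℕ}
    (S₁ S₂ S₃ S₄ : Set (Fin n → F)) (A B C D : Fin n → F) :
    (fun i => eForm u v (A i, B i, C i, D i)) ∈ combSet F R u v S₁ S₂ S₃ S₄ ↔
      A ∈ S₁ ∧ B ∈ S₂ ∧ C ∈ S₃ ∧ D ∈ S₄ := by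
  constructor
  · rintro ⟨a, ha, b, hb, c, hc, d, hd, hx⟩
    have hcomp : ∀ i, A i = a i ∧ B i = b i ∧ C i = c i ∧ D i = d i := by
      intro i
      exact eForm_tuple_inj u v hbij (congrFun hx i)
    have hA : A = a := funext fun i => (hcomp i).1
    have hB : B = b := funext fun i => (hcomp i).2.1
    have hC : C = c := funext fun i => (hcomp i).2.2.1
    have hD : D = d := funext fun i => (hcomp i).2.2.2
    rw [hA, hB, hC, hD]
    exact ⟨ha, hb, hc, hd⟩
  · rintro ⟨hA, hB, hC, hD⟩
    exact ⟨A, hA, B, hB, C, hC, D, hD, rfl⟩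

end Aux

theorem stmt10 (p m : ℕ) (hp : p.Prime) (hodd : p ≠ 2) (hm : 0 < m)
    (F : Type*) [Field F] [Fintype F] (hF : Fintype.card F = p ^ m)
    (R : Type*) [CommRing R] [Algebra F R] (u v : R)
    (hu : u * u = u) (hv : v * v = v)
    (hbij : Function.Bijective (stdForm F R u v))
    (n : ℕ)
    (C : Submodule R (Fin n → R)) (C₁ C₂ C₃ C₄ : Submodule F (Fin n → F))
    (hC : (C : Set (Fin n → R)) = combSet F R u v (C₁ : Set (Fin n → F)) C₂ C₃ C₄) :
    dualSet (C : Set (Fin n → R)) =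
      combSet F R u v (dualSet (C₁ : Set (Fin n → F))) (dualSet (C₂ : Set (Fin n → F)))
        (dualSet (C₃ : Set (Fin n → F))) (dualSet (C₄ : Set (Fin n → F))) ∧
    ((C : Set (Fin n → R)) = dualSet (C : Set (Fin n → R)) ↔
      ((C₁ : Set (Fin n → F)) = dualSet (C₁ : Set (Fin n → F)) ∧
       (C₂ : Set (Fin n → F)) = dualSet (C₂ : Set (Fin n → F)) ∧
       (C₃ : Set (Fin n → F)) = dualSet (C₃ : Set (Fin n → F)) ∧
       (C₄ : Set (Fin n → F)) = dualSet (C₄ : Set (Fin n → F)))) := by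
  classical
  -- key: inner product of two eForm-vectors
  have inner_eq : ∀ (A B Cc D a b c d : Fin n → F),
      ∑ i, eForm u v (A i, B i, Cc i, D i) * eForm u v (a i, b i, c i, d i)
        = eForm u v (∑ i, A i * a i, ∑ i, B i * b i, ∑ i, Cc i * c i, ∑ i, D i * d i) := by
    intro A B Cc D a b c d
    rw [← eForm_sum]
    exact Finset.sum_congr rfl fun i _ => eForm_mul u v hu hv _ _
  have eForm_eq_zero : ∀ {a b c d : F},
      eForm u v (a, b, c, d) = 0 → a = 0 ∧ b = 0 ∧ c = 0 ∧ d = 0 := by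
    intro a b c d h
    exact eForm_tuple_inj u v hbij (h.trans (eForm_zero u v).symm)
  -- part 1
  have part1 : dualSet (C : Set (Fin n → R)) =
      combSet F R u v (dualSet (C₁ : Set (Fin n → F))) (dualSet (C₂ : Set (Fin n → F)))
        (dualSet (C₃ : Set (Fin n → F))) (dualSet (C₄ : Set (Fin n → F))) := by
    ext x
    constructor
    · intro hx
      -- decompose x pointwise
      have hdec : ∀ i, ∃ t : F × F × F × F, eForm u v t = x i := fun i =>
        (eForm_bij u v hbij).2 (x i)
      choose t ht using hdec
      set A : Fin n → F := fun i => (t i).1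
      set B : Fin n → F := fun i => (t i).2.1
      set Cc : Fin n → F := fun i => (t i).2.2.1
      set D : Fin n → F := fun i => (t i).2.2.2
      have hx' : x = fun i => eForm u v (A i, B i, Cc i, D i) := by
        funext i; rw [← ht i]
      have key : ∀ a ∈ C₁, ∀ b ∈ C₂, ∀ c ∈ C₃, ∀ d ∈ C₄,
          (∑ i, A i * a i) = 0 ∧ (∑ i, B i * b i) = 0 ∧
          (∑ i, Cc i * c i) = 0 ∧ (∑ i, D i * d i) = 0 := by
        intro a ha b hb c hc d hd
        have hcmem : (fun i => eForm u v (a i, b i, c i, d i)) ∈ (C : Set (Fin n → R)) := by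
          rw [hC]; exact ⟨a, ha, b, hb, c, hc, d, hd, rfl⟩
        have := hx _ hcmem
        rw [hx'] at this
        simp only at this
        rw [inner_eq] at this
        exact eForm_eq_zero this
      have hA : A ∈ dualSet (C₁ : Set (Fin n → F)) := fun a ha =>
        (key a ha 0 C₂.zero_mem 0 C₃.zero_mem 0 C₄.zero_mem).1
      have hB : B ∈ dualSet (C₂ : Set (Fin n → F)) := fun b hb =>
        (key 0 C₁.zero_mem b hb 0 C₃.zero_mem 0 C₄.zero_mem).2.1
      have hCc : Cc ∈ dualSet (C₃ : Set (Fin n → F)) := fun c hc =>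
        (key 0 C₁.zero_mem 0 C₂.zero_mem c hc 0 C₄.zero_mem).2.2.1
      have hD : D ∈ dualSet (C₄ : Set (Fin n → F)) := fun d hd =>
        (key 0 C₁.zero_mem 0 C₂.zero_mem 0 C₃.zero_mem d hd).2.2.2
      exact ⟨A, hA, B, hB, Cc, hCc, D, hD, hx'⟩
    · rintro ⟨A, hA, B, hB, Cc, hCc, D, hD, hx⟩
      intro cv hcv
      rw [hC] at hcv
      obtain ⟨a, ha, b, hb, c, hc, d, hd, hcv'⟩ := hcv
      rw [hx, hcv']
      show ∑ i, eForm u v (A i, B i, Cc i, D i) * eForm u v (a i, b i, c i, d i) = 0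
      rw [inner_eq, hA a ha, hB b hb, hCc c hc, hD d hd]
      exact eForm_zero u v
  refine ⟨part1, ?_⟩
  -- zero vectors are in every dual
  have zero_dual : ∀ (S : Set (Fin n → F)), (0 : Fin n → F) ∈ dualSet S := by
    intro S c _; simp
  constructor
  · intro hself
    have hcomb : combSet F R u v (C₁ : Set (Fin n → F)) C₂ C₃ C₄ =
        combSet F R u v (dualSet (C₁ : Set (Fin n → F))) (dualSet (C₂ : Set (Fin n → F)))
          (dualSet (C₃ : Set (Fin n → F))) (dualSet (C₄ : Set (Fin n → F))) := by
      rw [← hC, hself, part1]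
    refine ⟨?_, ?_, ?_, ?_⟩ <;> ext w
    · have h1 := (mem_combSet_iff_s10 u v hbij (C₁ : Set (Fin n → F)) C₂ C₃ C₄ w 0 0 0)
      have h2 := (mem_combSet_iff_s10 u v hbij (dualSet (C₁ : Set (Fin n → F)))
        (dualSet (C₂ : Set (Fin n → F))) (dualSet (C₃ : Set (Fin n → F)))
        (dualSet (C₄ : Set (Fin n → F))) w 0 0 0)
      rw [← hcomb] at h2
      constructor
      · intro hw
        exact (h2.1 (h1.2 ⟨hw, C₂.zero_mem, C₃.zero_mem, C₄.zero_mem⟩)).1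
      · intro hw
        exact (h1.1 (h2.2 ⟨hw, zero_dual _, zero_dual _, zero_dual _⟩)).1
    · have h1 := (mem_combSet_iff_s10 u v hbij (C₁ : Set (Fin n → F)) C₂ C₃ C₄ 0 w 0 0)
      have h2 := (mem_combSet_iff_s10 u v hbij (dualSet (C₁ : Set (Fin n → F)))
        (dualSet (C₂ : Set (Fin n → F))) (dualSet (C₃ : Set (Fin n → F)))
        (dualSet (C₄ : Set (Fin n → F))) 0 w 0 0)
      rw [← hcomb] at h2
      constructor
      · intro hw
        exact (h2.1 (h1.2 ⟨C₁.zero_mem, hw, C₃.zero_mem, C₄.zero_mem⟩)).2.1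
      · intro hw
        exact (h1.1 (h2.2 ⟨zero_dual _, hw, zero_dual _, zero_dual _⟩)).2.1
    · have h1 := (mem_combSet_iff_s10 u v hbij (C₁ : Set (Fin n → F)) C₂ C₃ C₄ 0 0 w 0)
      have h2 := (mem_combSet_iff_s10 u v hbij (dualSet (C₁ : Set (Fin n → F)))
        (dualSet (C₂ : Set (Fin n → F))) (dualSet (C₃ : Set (Fin n → F)))
        (dualSet (C₄ : Set (Fin n → F))) 0 0 w 0)
      rw [← hcomb] at h2
      constructor
      · intro hw
        exact (h2.1 (h1.2 ⟨C₁.zero_mem, C₂.zero_mem, hw, C₄.zero_mem⟩)).2.2.1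
      · intro hw
        exact (h1.1 (h2.2 ⟨zero_dual _, zero_dual _, hw, zero_dual _⟩)).2.2.1
    · have h1 := (mem_combSet_iff_s10 u v hbij (C₁ : Set (Fin n → F)) C₂ C₃ C₄ 0 0 0 w)
      have h2 := (mem_combSet_iff_s10 u v hbij (dualSet (C₁ : Set (Fin n → F)))
        (dualSet (C₂ : Set (Fin n → F))) (dualSet (C₃ : Set (Fin n → F)))
        (dualSet (C₄ : Set (Fin n → F))) 0 0 0 w)
      rw [← hcomb] at h2
      constructor
      · intro hw
        exact (h2.1 (h1.2 ⟨C₁.zero_mem, C₂.zero_mem, C₃.zero_mem, hw⟩)).2.2.2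
      · intro hw
        exact (h1.1 (h2.2 ⟨zero_dual _, zero_dual _, zero_dual _, hw⟩)).2.2.2
  · rintro ⟨h1, h2, h3, h4⟩
    rw [part1, hC, ← h1, ← h2, ← h3, ← h4]
end

section
/- Let C₁,...,C₄ be skew cyclic codes over F_q generated (as left submodules of F_q[x;θ]/⟨xⁿ-1⟩) by monic right divisors f₁(x),...,f₄(x) of xⁿ-1 in the skew polynomial ring F_q[x;θ]. Then the skew cyclic code C = e₁C₁ ⊕ e₂C₂ ⊕ e₃C₃ ⊕ e₄C₄ over R is generated by the single polynomial f(x) = e₁f₁(x) + e₂f₂(x) + e₃f₃(x) + e₄f₄(x), and f(x) is a right divisor of xⁿ-1 in R[x;θ_t]. -/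
open Polynomial

/-- Multiplication in the skew polynomial ring `S[x;θ]`:
`(a xⁱ) * (b xʲ) = a θⁱ(b) x^(i+j)`. -/
noncomputable def skewMul {S : Type*} [CommRing S] (θ : S → S) (f g : Polynomial S) :
    Polynomial S :=
  ∑ i ∈ f.support, ∑ j ∈ g.support,
    Polynomial.C (f.coeff i * θ^[i] (g.coeff j)) * Polynomial.X ^ (i + j)

/-- Reduction of a skew polynomial modulo `xⁿ - 1`, giving the coefficient vector of the
canonical representative of degree `< n` (using `x^(n+j) ≡ xʲ`). -/
def redMod {S : Type*} [CommRing S] (n : ℕ) [NeZero n] (f : Polynomial S) : Fin n → S :=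
  fun i => ∑ j ∈ f.support.filter (fun j => j % n = (i : ℕ)), f.coeff j

/-- The skew cyclic code (left submodule of `S[x;θ]/⟨xⁿ-1⟩`) generated by `f`. -/
noncomputable def skewGen {S : Type*} [CommRing S] (θ : S → S) (n : ℕ) [NeZero n]
    (f : Polynomial S) : Set (Fin n → S) :=
  {c | ∃ h : Polynomial S, c = redMod n (skewMul θ h f)}

section Aux

variable {S : Type*} [CommRing S]

lemma skewMul_coeff (θ : S → S) (hθ0 : θ 0 = 0) (f g : Polynomial S) (k : ℕ) :
    (skewMul θ f g).coeff k
      = ∑ i ∈ Finset.range (k + 1), f.coeff i * θ^[i] (g.coeff (k - i)) := by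
  classical
  have hiter : ∀ i : ℕ, θ^[i] (0 : S) = 0 := fun i => Function.iterate_fixed hθ0 i
  unfold skewMul
  rw [Polynomial.finset_sum_coeff]
  simp_rw [Polynomial.finset_sum_coeff, Polynomial.coeff_C_mul, Polynomial.coeff_X_pow,
    mul_ite, mul_one, mul_zero]
  have step1 : ∀ i : ℕ,
      (∑ j ∈ g.support, if k = i + j then f.coeff i * θ^[i] (g.coeff j) else 0)
        = (if i ≤ k then f.coeff i * θ^[i] (g.coeff (k - i)) else 0) := by
    intro i
    by_cases hik : i ≤ k
    · rw [if_pos hik, Finset.sum_eq_single (k - i), if_pos (by omega)]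
      · intro j _ hne
        rw [if_neg (by omega)]
      · intro hns
        rw [if_pos (by omega), Polynomial.notMem_support_iff.mp hns, hiter, mul_zero]
    · rw [if_neg hik]
      apply Finset.sum_eq_zero
      intro j _
      rw [if_neg (by omega)]
  simp_rw [step1]
  rw [← Finset.sum_filter]
  apply Finset.sum_subset
  · intro x hx
    simp only [Finset.mem_filter] at hx
    exact Finset.mem_range.mpr (by omega)
  · intro x hx hnx
    have : f.coeff x = 0 := by
      by_contra hc
      exact hnx (Finset.mem_filter.mpr ⟨Polynomial.mem_support_iff.mpr hc, by
        have := Finset.mem_range.mp hx; omega⟩)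
    rw [this, zero_mul]

lemma redMod_subset {n : ℕ} [NeZero n] (f : Polynomial S) (T : Finset ℕ)
    (hT : f.support ⊆ T) (i : Fin n) :
    redMod n f i = ∑ j ∈ T.filter (fun j => j % n = (i : ℕ)), f.coeff j := by
  classical
  apply Finset.sum_subset (Finset.filter_subset_filter _ hT)
  intro x hx hnx
  by_contra hc
  exact hnx (Finset.mem_filter.mpr ⟨Polynomial.mem_support_iff.mpr hc,
    (Finset.mem_filter.mp hx).2⟩)

end Aux

section Key

variable {F R : Type*} [Field F] [CommRing R]

lemma key_coeff (Φ : (Fin 4 → F) → R)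
    (Φadd : ∀ v w, Φ (v + w) = Φ v + Φ w)
    (Φmul : ∀ v w, Φ (fun l => v l * w l) = Φ v * Φ w)
    (θ : R → R) (fr : F → F)
    (hθΦ : ∀ v, θ (Φ v) = Φ (fun l => fr (v l)))
    (hfr0 : fr 0 = 0)
    (h g : Polynomial R) (H G : Fin 4 → Polynomial F)
    (hc : ∀ j, h.coeff j = Φ (fun l => (H l).coeff j))
    (gc : ∀ j, g.coeff j = Φ (fun l => (G l).coeff j))
    (k : ℕ) :
    (skewMul θ h g).coeff k = Φ (fun l => (skewMul fr (H l) (G l)).coeff k) := by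
  classical
  have Φ0 : Φ 0 = 0 := by
    have := Φadd 0 0
    simpa using this
  have hθ0 : θ 0 = 0 := by
    rw [← Φ0, hθΦ]
    rw [show (fun l => fr ((0 : Fin 4 → F) l)) = 0 from funext fun l => by simp [hfr0], Φ0]
  have hθit : ∀ (i : ℕ) (v : Fin 4 → F), θ^[i] (Φ v) = Φ (fun l => fr^[i] (v l)) := by
    intro i
    induction i with
    | zero => intro v; simp
    | succ i ih =>
      intro v
      rw [Function.iterate_succ_apply', ih, hθΦ]
      congr 1
      funext l
      rw [Function.iterate_succ_apply']
  let ΦM : (Fin 4 → F) →+ R := AddMonoidHom.mk' Φ Φadd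
  rw [skewMul_coeff θ hθ0]
  have hterm : ∀ i ∈ Finset.range (k + 1),
      h.coeff i * θ^[i] (g.coeff (k - i))
        = ΦM (fun l => (H l).coeff i * fr^[i] ((G l).coeff (k - i))) := by
    intro i _
    show _ = Φ _
    rw [hc, gc, hθit, ← Φmul]
  rw [Finset.sum_congr rfl hterm, ← map_sum ΦM]
  show Φ _ = Φ _
  congr 1
  funext l
  rw [Finset.sum_apply, skewMul_coeff fr hfr0]

lemma key_red (Φ : (Fin 4 → F) → R)
    (Φadd : ∀ v w, Φ (v + w) = Φ v + Φ w)
    (A : Polynomial R) (B : Fin 4 → Polynomial F)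
    (hAB : ∀ k, A.coeff k = Φ (fun l => (B l).coeff k))
    (n : ℕ) [NeZero n] (i : Fin n) :
    redMod n A i = Φ (fun l => redMod n (B l) i) := by
  classical
  let ΦM : (Fin 4 → F) →+ R := AddMonoidHom.mk' Φ Φadd
  set T : Finset ℕ := A.support ∪ Finset.univ.biUnion (fun l => (B l).support) with hT
  rw [redMod_subset A T (Finset.subset_union_left) i]
  have hB : ∀ l, redMod n (B l) i
      = ∑ j ∈ T.filter (fun j => j % n = (i : ℕ)), (B l).coeff j := by
    intro l
    refine redMod_subset (B l) T (fun x hx => ?_) i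
    rw [hT]
    exact Finset.mem_union_right _ (Finset.mem_biUnion.mpr ⟨l, Finset.mem_univ l, hx⟩)
  have hfun : (fun l => redMod n (B l) i)
      = ∑ j ∈ T.filter (fun j => j % n = (i : ℕ)), (fun l => (B l).coeff j) := by
    funext l
    rw [hB, Finset.sum_apply]
  rw [hfun, show Φ _ = ΦM _ from rfl, map_sum ΦM]
  apply Finset.sum_congr rfl
  intro j _
  rw [hAB]
  rfl

end Key

set_option maxHeartbeats 2000000 in
theorem stmt11 (p m t : ℕ) (hp : p.Prime) (hodd : p ≠ 2) (ht : 0 < t) (htm : t ∣ m)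
    (F : Type*) [Field F] [Fintype F] (hF : Fintype.card F = p ^ m)
    (R : Type*) [CommRing R] [Algebra F R] (u v : R)
    (hu : u * u = u) (hv : v * v = v)
    (hbij : Function.Bijective (stdForm F R u v))
    (θ : R → R)
    (hθ : ∀ a b c d : F, θ (stdForm F R u v (a, b, c, d)) =
      stdForm F R u v (a ^ p ^ t, b ^ p ^ t, c ^ p ^ t, d ^ p ^ t))
    (n : ℕ) [NeZero n]
    (f₁ f₂ f₃ f₄ : Polynomial F)
    (hmonic : f₁.Monic ∧ f₂.Monic ∧ f₃.Monic ∧ f₄.Monic)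
    (hdvd₁ : ∃ h : Polynomial F, (X ^ n - 1 : Polynomial F) = skewMul (· ^ p ^ t) h f₁)
    (hdvd₂ : ∃ h : Polynomial F, (X ^ n - 1 : Polynomial F) = skewMul (· ^ p ^ t) h f₂)
    (hdvd₃ : ∃ h : Polynomial F, (X ^ n - 1 : Polynomial F) = skewMul (· ^ p ^ t) h f₃)
    (hdvd₄ : ∃ h : Polynomial F, (X ^ n - 1 : Polynomial F) = skewMul (· ^ p ^ t) h f₄) :
    let ι := algebraMap F R
    let fmix : Polynomial R :=
      Polynomial.C (1 - u - v + u * v) * f₁.map ι + Polynomial.C (u - u * v) * f₂.map ι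
        + Polynomial.C (v - u * v) * f₃.map ι + Polynomial.C (u * v) * f₄.map ι
    -- the code e₁⟨f₁⟩ ⊕ e₂⟨f₂⟩ ⊕ e₃⟨f₃⟩ ⊕ e₄⟨f₄⟩ is generated by the single polynomial fmix
    combSet F R u v (skewGen (· ^ p ^ t) n f₁) (skewGen (· ^ p ^ t) n f₂)
        (skewGen (· ^ p ^ t) n f₃) (skewGen (· ^ p ^ t) n f₄) = skewGen θ n fmix ∧
    -- and fmix is a right divisor of xⁿ - 1 in R[x;θ]
    (∃ h : Polynomial R, (X ^ n - 1 : Polynomial R) = skewMul θ h fmix) := by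
  classical
  intro ι fmix
  have hu2 : u ^ 2 = u := by rw [sq, hu]
  have hv2 : v ^ 2 = v := by rw [sq, hv]
  -- characteristic of F
  have hpfact : Fact p.Prime := ⟨hp⟩
  have hm : m ≠ 0 := by
    rintro rfl
    rw [pow_zero] at hF
    exact absurd hF (Fintype.one_lt_card.ne')
  have hcard0 : ((p : F)) ^ m = 0 := by
    have h0 := Nat.cast_card_eq_zero F
    rw [hF] at h0
    push_cast at h0
    exact h0
  have hpF : (p : F) = 0 := pow_eq_zero_iff hm |>.mp hcard0
  have hchar : CharP F p := (CharP.charP_iff_prime_eq_zero hp).mpr hpF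
  have fradd : ∀ a b : F, (a + b) ^ p ^ t = a ^ p ^ t + b ^ p ^ t :=
    fun a b => add_pow_char_pow a b p t
  have frsub : ∀ a b : F, (a - b) ^ p ^ t = a ^ p ^ t - b ^ p ^ t :=
    fun a b => sub_pow_char_pow a b t
  have fr0 : (0 : F) ^ p ^ t = 0 := zero_pow (pow_ne_zero t hp.pos.ne')
  -- the component-mixing map Φ
  set Φ : (Fin 4 → F) → R := fun w => (1 - u - v + u * v) * algebraMap F R (w 0)
      + (u - u * v) * algebraMap F R (w 1) + (v - u * v) * algebraMap F R (w 2)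
      + u * v * algebraMap F R (w 3) with hΦ
  have Φadd : ∀ w w', Φ (w + w') = Φ w + Φ w' := by
    intro w w'
    simp only [hΦ, Pi.add_apply, map_add]
    ring
  have Φmul : ∀ w w', Φ (fun l => w l * w' l) = Φ w * Φ w' := by
    intro w w'
    simp only [hΦ, map_mul]
    ring_nf
    simp only [hu2, hv2]
    ring_nf
  have Φstd : ∀ w, Φ w = stdForm F R u v (w 0, w 1 - w 0, w 2 - w 0, w 0 + w 3 - w 1 - w 2) := by
    intro w
    simp only [hΦ, stdForm, map_sub, map_add]
    ring
  have Φconst : ∀ c : F, Φ (fun _ => c) = algebraMap F R c := by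
    intro c
    simp only [hΦ]
    ring
  have Φθ : ∀ w, θ (Φ w) = Φ (fun l => (w l) ^ p ^ t) := by
    intro w
    rw [Φstd w, hθ, Φstd (fun l => w l ^ p ^ t)]
    rw [frsub, frsub, show (w 0 + w 3 - w 1 - w 2) ^ p ^ t
        = w 0 ^ p ^ t + w 3 ^ p ^ t - w 1 ^ p ^ t - w 2 ^ p ^ t by rw [frsub, frsub, fradd]]
  have Φbij : Function.Bijective Φ := by
    have hT : Function.Bijective (fun w : Fin 4 → F =>
        ((w 0, w 1 - w 0, w 2 - w 0, w 0 + w 3 - w 1 - w 2) : F × F × F × F)) := by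
      rw [Function.bijective_iff_has_inverse]
      refine ⟨fun x => ![x.1, x.1 + x.2.1, x.1 + x.2.2.1, x.1 + x.2.1 + x.2.2.1 + x.2.2.2],
        ?_, ?_⟩
      · intro w
        funext l
        fin_cases l <;> simp <;> ring
      · rintro ⟨a, b, c, d⟩
        simp only [Matrix.cons_val_zero, Matrix.cons_val_one, Matrix.head_cons,
          Matrix.cons_val_two, Matrix.cons_val_three, Matrix.tail_cons]
        refine Prod.ext ?_ (Prod.ext ?_ (Prod.ext ?_ ?_)) <;> simp <;> ring
    have hcomp : Φ = (stdForm F R u v) ∘ (fun w : Fin 4 → F =>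
        ((w 0, w 1 - w 0, w 2 - w 0, w 0 + w 3 - w 1 - w 2) : F × F × F × F)) :=
      funext Φstd
    rw [hcomp]
    exact hbij.comp hT
  -- inverse components
  let eΦ : (Fin 4 → F) ≃ R := Equiv.ofBijective Φ Φbij
  let σ : R → (Fin 4 → F) := fun r => eΦ.symm r
  have Φσ : ∀ x : R, Φ (σ x) = x := fun x => eΦ.apply_symm_apply x
  have σ0 : σ (0 : R) = 0 := by
    have := Φbij.injective (a₁ := σ 0) (a₂ := 0)
    apply this
    rw [Φσ]
    have Φ0 : Φ 0 = 0 := by have := Φadd 0 0; simpa using this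
    rw [Φ0]
  let comp : Fin 4 → Polynomial R → Polynomial F := fun l A =>
    ⟨AddMonoidAlgebra.ofCoeff (A.toFinsupp.coeff.mapRange (fun r => σ r l) (by show σ (0:R) l = 0; rw [σ0]; rfl))⟩
  have compc : ∀ (l : Fin 4) (A : Polynomial R) (j : ℕ),
      (comp l A).coeff j = σ (A.coeff j) l := by
    intro l A j
    simp [comp, Polynomial.coeff_ofFinsupp, Finsupp.mapRange_apply, Polynomial.coeff]
  -- fv and coefficients of fmix
  set fv : Fin 4 → Polynomial F := ![f₁, f₂, f₃, f₄] with hfv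
  have hfmixd : fmix = Polynomial.C (1 - u - v + u * v) * f₁.map (algebraMap F R)
      + Polynomial.C (u - u * v) * f₂.map (algebraMap F R)
      + Polynomial.C (v - u * v) * f₃.map (algebraMap F R)
      + Polynomial.C (u * v) * f₄.map (algebraMap F R) := rfl
  have hfmixc : ∀ k, fmix.coeff k = Φ (fun l => (fv l).coeff k) := by
    intro k
    simp only [hfmixd, Polynomial.coeff_add, Polynomial.coeff_C_mul, Polynomial.coeff_map,
      hΦ, hfv, Matrix.cons_val_zero, Matrix.cons_val_one, Matrix.head_cons,
      Matrix.cons_val_two, Matrix.cons_val_three, Matrix.tail_cons]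
  -- the mixing of four F-polynomials into an R-polynomial
  let mix : (Fin 4 → Polynomial F) → Polynomial R := fun H =>
    Polynomial.C (1 - u - v + u * v) * (H 0).map (algebraMap F R)
      + Polynomial.C (u - u * v) * (H 1).map (algebraMap F R)
      + Polynomial.C (v - u * v) * (H 2).map (algebraMap F R)
      + Polynomial.C (u * v) * (H 3).map (algebraMap F R)
  have mixc : ∀ (H : Fin 4 → Polynomial F) (k : ℕ),
      (mix H).coeff k = Φ (fun l => (H l).coeff k) := by
    intro H k
    simp only [mix, Polynomial.coeff_add, Polynomial.coeff_C_mul, Polynomial.coeff_map, hΦ]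
  constructor
  · -- set equality
    ext x
    simp only [combSet, skewGen, Set.mem_setOf_eq]
    constructor
    · rintro ⟨a, ⟨h₁, rfl⟩, b, ⟨h₂, rfl⟩, c, ⟨h₃, rfl⟩, d, ⟨h₄, rfl⟩, rfl⟩
      set Hv : Fin 4 → Polynomial F := ![h₁, h₂, h₃, h₄] with hHv
      refine ⟨mix Hv, ?_⟩
      have hcoef : ∀ k, (skewMul θ (mix Hv) fmix).coeff k
          = Φ (fun l => (skewMul (· ^ p ^ t) (Hv l) (fv l)).coeff k) :=
        key_coeff Φ Φadd Φmul θ (· ^ p ^ t) Φθ fr0 (mix Hv) fmix Hv fv (mixc Hv) hfmixc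
      funext i
      rw [key_red Φ Φadd (skewMul θ (mix Hv) fmix)
        (fun l => skewMul (· ^ p ^ t) (Hv l) (fv l)) hcoef n i]
      simp only [hΦ, hHv, hfv, Matrix.cons_val_zero, Matrix.cons_val_one, Matrix.head_cons,
        Matrix.cons_val_two, Matrix.cons_val_three, Matrix.tail_cons]
    · rintro ⟨h, rfl⟩
      have hhc : ∀ j, h.coeff j = Φ (fun l => (comp l h).coeff j) := by
        intro j
        rw [show (fun l => (comp l h).coeff j) = σ (h.coeff j) from
          funext fun l => compc l h j, Φσ]
      have hcoef : ∀ k, (skewMul θ h fmix).coeff k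
          = Φ (fun l => (skewMul (· ^ p ^ t) (comp l h) (fv l)).coeff k) :=
        key_coeff Φ Φadd Φmul θ (· ^ p ^ t) Φθ fr0 h fmix (fun l => comp l h) fv hhc hfmixc
      refine ⟨redMod n (skewMul (· ^ p ^ t) (comp 0 h) f₁), ⟨comp 0 h, rfl⟩,
        redMod n (skewMul (· ^ p ^ t) (comp 1 h) f₂), ⟨comp 1 h, rfl⟩,
        redMod n (skewMul (· ^ p ^ t) (comp 2 h) f₃), ⟨comp 2 h, rfl⟩,
        redMod n (skewMul (· ^ p ^ t) (comp 3 h) f₄), ⟨comp 3 h, rfl⟩, ?_⟩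
      funext i
      rw [key_red Φ Φadd (skewMul θ h fmix)
        (fun l => skewMul (· ^ p ^ t) (comp l h) (fv l)) hcoef n i]
      simp only [hΦ, hfv, Matrix.cons_val_zero, Matrix.cons_val_one, Matrix.head_cons,
        Matrix.cons_val_two, Matrix.cons_val_three, Matrix.tail_cons]
  · -- divisibility
    obtain ⟨g₁, hg₁⟩ := hdvd₁
    obtain ⟨g₂, hg₂⟩ := hdvd₂
    obtain ⟨g₃, hg₃⟩ := hdvd₃
    obtain ⟨g₄, hg₄⟩ := hdvd₄
    set gv : Fin 4 → Polynomial F := ![g₁, g₂, g₃, g₄] with hgv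
    have hg : ∀ l, (X ^ n - 1 : Polynomial F) = skewMul (· ^ p ^ t) (gv l) (fv l) := by
      intro l
      fin_cases l <;>
        simp only [hgv, hfv, Matrix.cons_val_zero, Matrix.cons_val_one, Matrix.head_cons,
          Matrix.cons_val_two, Matrix.cons_val_three, Matrix.tail_cons] <;>
        assumption
    have hXn : ∀ k, (X ^ n - 1 : Polynomial R).coeff k
        = algebraMap F R ((X ^ n - 1 : Polynomial F).coeff k) := by
      intro k
      simp only [Polynomial.coeff_sub, Polynomial.coeff_X_pow, Polynomial.coeff_one, map_sub]
      split_ifs <;> simp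
    refine ⟨mix gv, ?_⟩
    apply Polynomial.ext
    intro k
    rw [key_coeff Φ Φadd Φmul θ (· ^ p ^ t) Φθ fr0 (mix gv) fmix gv fv (mixc gv) hfmixc k, hXn k,
      show (fun l => (skewMul (· ^ p ^ t) (gv l) (fv l)).coeff k)
        = fun _ => (X ^ n - 1 : Polynomial F).coeff k from
        funext fun l => by rw [← hg l], Φconst]
end

section
/- If n is odd and α ∈ R is a unit with α² = 1, then the map ρ : R[x;θ_t]/⟨xⁿ-1⟩ → R[x;θ_t]/⟨xⁿ-α⟩ given by ρ(f(x)) = f(αx) is a well-defined left R-module isomorphism. -/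
open Polynomial

/-- Reduction of a skew polynomial modulo `xⁿ - α` (for `α` fixed by the automorphism),
giving the coefficient vector of the canonical representative of degree `< n`
(using `x^(n+j) ≡ α xʲ`). -/
def redModC {S : Type*} [CommRing S] (n : ℕ) [NeZero n] (α : S) (f : Polynomial S) :
    Fin n → S :=
  fun i => ∑ j ∈ f.support.filter (fun j => j % n = (i : ℕ)), α ^ (j / n) * f.coeff j

/-- The substitution `f(x) ↦ f(αx)`, sending `Σ aᵢxⁱ` to `Σ aᵢαⁱxⁱ`. -/
noncomputable def substC {S : Type*} [CommRing S] (α : S) (f : Polynomial S) :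
    Polynomial S :=
  ∑ i ∈ f.support, Polynomial.C (f.coeff i * α ^ i) * Polynomial.X ^ i


lemma substC_coeff {S : Type*} [CommRing S] (α : S) (f : Polynomial S) (k : ℕ) :
    (substC α f).coeff k = f.coeff k * α ^ k := by
  unfold substC
  rw [Polynomial.finset_sum_coeff]
  simp only [Polynomial.coeff_C_mul, Polynomial.coeff_X_pow, mul_ite, mul_one, mul_zero]
  rw [Finset.sum_ite_eq f.support k (fun i => f.coeff i * α ^ i)]
  split_ifs with h
  · rfl
  · simp [Polynomial.notMem_support_iff.mp h]

lemma substC_support {S : Type*} [CommRing S] {α : S} (hα : IsUnit α) (f : Polynomial S) :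
    (substC α f).support = f.support := by
  ext k
  simp only [Polynomial.mem_support_iff, substC_coeff]
  constructor
  · intro h hc; exact h (by rw [hc, zero_mul])
  · intro h hc
    exact h (((hα.pow k).mul_left_eq_zero).mp hc)

theorem stmt12 (p m t : ℕ) (hp : p.Prime) (hodd : p ≠ 2) (ht : 0 < t) (htm : t ∣ m)
    (F : Type*) [Field F] [Fintype F] (hF : Fintype.card F = p ^ m)
    (R : Type*) [CommRing R] [Algebra F R] (u v : R)
    (hu : u * u = u) (hv : v * v = v)
    (hbij : Function.Bijective (stdForm F R u v))
    (θ : R → R)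
    (hθ : ∀ a b c d : F, θ (stdForm F R u v (a, b, c, d)) =
      stdForm F R u v (a ^ p ^ t, b ^ p ^ t, c ^ p ^ t, d ^ p ^ t))
    (α : R) (hα : IsUnit α) (hαfix : θ α = α) (hα2 : α ^ 2 = 1)
    (n : ℕ) [NeZero n] (hn : Odd n) :
    -- ρ on canonical representatives of the quotients: (c₀,...,c_{n-1}) ↦ (α⁰c₀,...,α^{n-1}c_{n-1})
    let ρ : (Fin n → R) → (Fin n → R) := fun c i => α ^ (i : ℕ) * c i
    -- ρ is well defined: it intertwines reduction mod xⁿ-1 with reduction of f(αx) mod xⁿ-α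
    (∀ f : Polynomial R, ρ (redModC n 1 f) = redModC n α (substC α f)) ∧
    -- ρ is a bijection
    Function.Bijective ρ ∧
    -- ρ is a left R-module homomorphism
    (∀ (r : R) (c c' : Fin n → R),
      ρ (fun i => r * c i + c' i) = fun i => r * ρ c i + ρ c' i) := by

  intro ρ
  have hα2k : ∀ k : ℕ, α ^ (2 * k) = 1 := fun k => by
    rw [pow_mul, hα2, one_pow]
  refine ⟨?_, ?_, ?_⟩
  · intro f
    funext i
    show α ^ (i : ℕ) * redModC n 1 f i = redModC n α (substC α f) i
    unfold redModC
    rw [substC_support hα f, Finset.mul_sum]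
    refine Finset.sum_congr rfl ?_
    intro j hj
    rw [Finset.mem_filter] at hj
    rw [substC_coeff]
    have hd : j = n * (j / n) + (i : ℕ) := by
      conv_lhs => rw [← Nat.div_add_mod j n, hj.2]
    have key : α ^ (j / n + j) = α ^ (i : ℕ) := by
      obtain ⟨k, hk⟩ := hn
      set q := j / n with hq
      clear_value q
      rw [hd]
      have h2 : q + (n * q + (i : ℕ)) = 2 * ((k + 1) * q) + (i : ℕ) := by
        have h3 : n * q = 2 * (k * q) + q := by rw [hk]; ring
        have h4 : (k + 1) * q = k * q + q := by ring
        omega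
      rw [h2, pow_add, hα2k, one_mul]
    rw [one_pow, one_mul, ← key]
    ring
  · have hinv : Function.Involutive ρ := by
      intro c
      funext i
      show α ^ (i : ℕ) * (α ^ (i : ℕ) * c i) = c i
      rw [← mul_assoc, ← pow_add, ← two_mul, hα2k, one_mul]
    exact hinv.bijective
  · intro r c c'
    funext i
    show α ^ (i : ℕ) * (r * c i + c' i) = r * (α ^ (i : ℕ) * c i) + α ^ (i : ℕ) * c' i
    ring
end

section
/- Let n be odd, α ∈ R a unit fixed by θ_t with α² = 1, and define the permutation μ on Rⁿ by μ(c₀, c₁, ..., c_{n-1}) = (c₀, αc₁, α²c₂, ..., α^{n-1}c_{n-1}). Then a linear code C ⊆ Rⁿ is skew cyclic if and only if μ(C) is skew α-constacyclic. -/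
/-- The skew `α`-constacyclic shift `τ_α` with respect to `θ`:
`τ_α(c₀,...,c_{n-1}) = (α θ(c_{n-1}), θ(c₀), ..., θ(c_{n-2}))`. -/
def skewConstaShift {R : Type*} [Mul R] [One R] [DecidableEq R] (θ : R → R) (α : R)
    {n : ℕ} [NeZero n] (x : Fin n → R) : Fin n → R :=
  fun i => (if i = 0 then α else 1) * θ (x (i - 1))

lemma stdForm_mul (F R : Type*) [Field F] [CommRing R] [Algebra F R] (u v : R)
    (hu : u * u = u) (hv : v * v = v) (a b c d a' b' c' d' : F) :
    stdForm F R u v (a, b, c, d) * stdForm F R u v (a', b', c', d') =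
      stdForm F R u v (a * a', a * b' + b * a' + b * b', a * c' + c * a' + c * c',
        a * d' + d * a' + b * c' + c * b' + b * d' + d * b' + c * d' + d * c' + d * d') := by
  have hu2 : u ^ 2 = u := by rw [sq]; exact hu
  have hv2 : v ^ 2 = v := by rw [sq]; exact hv
  simp only [stdForm, map_mul, map_add]
  ring_nf
  rw [hu2, hv2]
  ring

theorem stmt13 (p m t : ℕ) (hp : p.Prime) (hodd : p ≠ 2) (ht : 0 < t) (htm : t ∣ m)
    (F : Type*) [Field F] [Fintype F] (hF : Fintype.card F = p ^ m)
    (R : Type*) [CommRing R] [DecidableEq R] [Algebra F R] (u v : R)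
    (hu : u * u = u) (hv : v * v = v)
    (hbij : Function.Bijective (stdForm F R u v))
    (θ : R → R)
    (hθ : ∀ a b c d : F, θ (stdForm F R u v (a, b, c, d)) =
      stdForm F R u v (a ^ p ^ t, b ^ p ^ t, c ^ p ^ t, d ^ p ^ t))
    (α : R) (hα : IsUnit α) (hαfix : θ α = α) (hα2 : α ^ 2 = 1)
    (n : ℕ) [NeZero n] (hn : Odd n) :
    let μ : (Fin n → R) → (Fin n → R) := fun c i => α ^ (i : ℕ) * c i
    ∀ C : Submodule R (Fin n → R),
      skewShift θ '' (C : Set (Fin n → R)) = C ↔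
        skewConstaShift θ α '' (μ '' (C : Set (Fin n → R))) = μ '' (C : Set (Fin n → R)) := by
  -- characteristic of F is p
  haveI hpfact : Fact p.Prime := ⟨hp⟩
  have hcharP : CharP F p := by
    obtain ⟨p', hc⟩ := CharP.exists F
    haveI := hc
    obtain ⟨k, hp', hcard⟩ := FiniteField.card F p'
    have hdvd : p' ∣ p ^ m := by
      rw [← hF, hcard]; exact dvd_pow_self p' k.pos.ne'
    have : p' = p := (Nat.prime_dvd_prime_iff_eq hp' hp).1 (hp'.dvd_of_dvd_pow hdvd)
    rwa [this] at hc
  haveI := hcharP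
  -- the Frobenius φ : F → F is additive
  have hfrob_add : ∀ a b : F, (a + b) ^ p ^ t = a ^ p ^ t + b ^ p ^ t := fun a b =>
    add_pow_char_pow a b p t
  -- θ is multiplicative
  have hθmul : ∀ x y : R, θ (x * y) = θ x * θ y := by
    intro x y
    obtain ⟨⟨a, b, c, d⟩, rfl⟩ := hbij.2 x
    obtain ⟨⟨a', b', c', d'⟩, rfl⟩ := hbij.2 y
    rw [stdForm_mul F R u v hu hv, hθ, hθ, hθ, stdForm_mul F R u v hu hv]
    congr 1
    simp only [Prod.mk.injEq, hfrob_add, mul_pow]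
  have hθα : ∀ x : R, θ (α * x) = α * θ x := fun x => by rw [hθmul, hαfix]
  -- α ^ n = α
  obtain ⟨k, hk⟩ := hn
  have hαn : α ^ n = α := by
    rw [hk, pow_add, pow_mul, hα2, one_pow, pow_one, one_mul]
  intro μ C
  set ν : (Fin n → R) → (Fin n → R) := fun c i => α * c i with hν
  -- key pointwise identity: τ_α ∘ μ = μ ∘ ν ∘ σ
  have hkey : ∀ c : Fin n → R,
      skewConstaShift θ α (μ c) = μ (ν (skewShift θ c)) := by
    intro c
    funext i
    simp only [skewConstaShift, skewShift, μ, ν]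
    rw [hθmul]
    have hθpow : θ (α ^ ((i - 1 : Fin n) : ℕ)) = α ^ ((i - 1 : Fin n) : ℕ) := by
      induction ((i - 1 : Fin n) : ℕ) with
      | zero =>
        simp only [pow_zero]
        have h1 : (1 : R) = stdForm F R u v (1, 0, 0, 0) := by
          simp [stdForm]
        rw [h1, hθ]
        have hq0 : p ^ t ≠ 0 := pow_ne_zero t hp.pos.ne'
        simp [zero_pow hq0]
      | succ j ih =>
        rw [pow_succ, hθmul, ih, hαfix]
    rw [hθpow]
    rcases eq_or_ne i 0 with hi | hi
    · subst hi
      have hval : ((0 - 1 : Fin n) : ℕ) = n - 1 := by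
        rw [Fin.sub_def]
        simp only [Fin.val_zero, Fin.val_one', zero_add]
        rcases eq_or_ne n 1 with h1 | h1
        · subst h1; rfl
        · have hpos := Nat.pos_of_ne_zero (NeZero.ne n)
          have hn1 : 1 % n = 1 := Nat.mod_eq_of_lt (by omega)
          rw [hn1, Nat.mod_eq_of_lt (by omega)]
          omega
      rw [if_pos rfl, hval]
      simp only [Fin.val_zero, pow_zero, one_mul]
      have h5 : α * (α ^ (n - 1) * θ (c ((0:Fin n) - 1))) =
          α ^ n * θ (c ((0:Fin n) - 1)) := by
        rw [← mul_assoc, ← pow_succ']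
        congr 2
        have := Nat.pos_of_ne_zero (NeZero.ne n)
        omega
      rw [h5, hαn]
    · simp only [if_neg hi, one_mul]
      have hipos : 0 < (i : ℕ) :=
        Nat.pos_of_ne_zero (fun h => hi (Fin.ext (by simp [h])))
      have hsub : ((i - 1 : Fin n) : ℕ) = (i : ℕ) - 1 := by
        rw [Fin.sub_def]
        simp only [Fin.val_one']
        rcases eq_or_ne n 1 with h1 | h1
        · omega
        · have hpos := Nat.pos_of_ne_zero (NeZero.ne n)
          have hn1 : (1 : ℕ) % n = 1 := Nat.mod_eq_of_lt (by omega)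
          rw [hn1]
          have h2 : (n - 1) + (i : ℕ) = ((i:ℕ) - 1) + n := by omega
          rw [h2, Nat.add_mod_right, Nat.mod_eq_of_lt (by omega)]
      rw [hsub]
      have h3 : α ^ ((i : ℕ) - 1) = α ^ (i : ℕ) * α := by
        have h2 : (i : ℕ) + 1 = ((i : ℕ) - 1) + 2 := by omega
        rw [← pow_succ, h2, pow_add, hα2, mul_one]
      rw [h3]
      ring
  -- ν '' C = C
  have hνmem : ∀ x : Fin n → R, x ∈ C → ν x ∈ C := by
    intro x hx
    have : ν x = α • x := by funext i; simp [ν, Pi.smul_apply, smul_eq_mul]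
    rw [this]
    exact C.smul_mem α hx
  have hνν : ∀ x : Fin n → R, ν (ν x) = x := by
    intro x
    funext i
    simp only [ν, ← mul_assoc, ← sq, hα2, one_mul]
  have hνC : ν '' (C : Set (Fin n → R)) = C := by
    apply Set.Subset.antisymm
    · rintro _ ⟨y, hy, rfl⟩; exact hνmem y hy
    · intro x hx
      exact ⟨ν x, hνmem x hx, hνν x⟩
  -- μ is injective
  have hμinj : Function.Injective μ := by
    intro c c' h
    funext i
    have := congrFun h i
    simp only [μ] at this
    exact (hα.pow (i : ℕ)).mul_left_cancel this
  -- image rewriting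
  have himg : skewConstaShift θ α '' (μ '' (C : Set (Fin n → R))) =
      μ '' (ν '' (skewShift θ '' (C : Set (Fin n → R)))) := by
    rw [← Set.image_comp, ← Set.image_comp, ← Set.image_comp]
    apply Set.image_congr'
    intro x
    simp only [Function.comp_apply]
    exact hkey x
  rw [himg]
  constructor
  · intro h
    rw [h, hνC]
  · intro h
    have h2 : ν '' (skewShift θ '' (C : Set (Fin n → R))) = C :=
      Set.image_injective.2 hμinj h
    have h3 : ν '' (ν '' (skewShift θ '' (C : Set (Fin n → R)))) = ν '' (C : Set (Fin n → R)) := by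
      rw [h2]
    rw [← Set.image_comp] at h3
    have h4 : (ν ∘ ν) = id := funext hνν
    rw [h4, Set.image_id] at h3
    rw [h3, hνC]
end

section
/- The Gray map intertwines the skew α-constacyclic shift and the index-4 skew quasi-twisted shift: Ψ ∘ τ_α = ω₄ ∘ Ψ on Rⁿ, where α is a unit of R whose four F_q-components under the idempotent decomposition are equal (α ∈ F_q ∩ units fixed by θ_t). Consequently, a linear code C over R is skew α-constacyclic if and only if Ψ(C) is a skew quasi-twisted code of length 4n over F_q of index 4. -/
/-- The index-4 skew quasi-twisted shift `ω₄` on `(F_qⁿ)⁴`, applying the skew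
`α`-constacyclic shift (with Frobenius `x ↦ x^(p^t)`) to each of the 4 blocks. -/
def quasiTwist4 {F : Type*} [Monoid F] [DecidableEq F] (p t : ℕ) (α : F) {n : ℕ} [NeZero n]
    (y : Fin 4 × Fin n → F) : Fin 4 × Fin n → F :=
  fun ji => (if ji.2 = 0 then α else 1) * (y (ji.1, ji.2 - 1)) ^ p ^ t

theorem stmt16 (p m t : ℕ) (hp : p.Prime) (hodd : p ≠ 2) (ht : 0 < t) (htm : t ∣ m)
    (F : Type*) [Field F] [Fintype F] [DecidableEq F] (hF : Fintype.card F = p ^ m)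
    (R : Type*) [CommRing R] [DecidableEq R] [Algebra F R] (u v : R)
    (hu : u * u = u) (hv : v * v = v)
    (hbij : Function.Bijective (stdForm F R u v))
    (θ : R → R)
    (hθ : ∀ a b c d : F, θ (stdForm F R u v (a, b, c, d)) =
      stdForm F R u v (a ^ p ^ t, b ^ p ^ t, c ^ p ^ t, d ^ p ^ t))
    (Ψ : R → (Fin 4 → F))
    (hΨ : ∀ a b c d : F,
      Ψ (stdForm F R u v (a, b, c, d)) = ![a, a + b, a + c, a + b + c + d])
    -- α comes from F_q (its four components are equal) and is fixed by the Frobenius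
    (α : F) (hα : α ≠ 0) (hαfix : α ^ p ^ t = α)
    (n : ℕ) [NeZero n] :
    (∀ x : Fin n → R,
      grayV Ψ (skewConstaShift θ (algebraMap F R α) x) = quasiTwist4 p t α (grayV Ψ x)) ∧
    (∀ C : Submodule R (Fin n → R),
      skewConstaShift θ (algebraMap F R α) '' (C : Set (Fin n → R)) = C ↔
        quasiTwist4 p t α '' (grayV Ψ '' (C : Set (Fin n → R))) =
          grayV Ψ '' (C : Set (Fin n → R))) := by
  -- characteristic of F is p
  haveI : Fact p.Prime := ⟨hp⟩
  have hchar : CharP F p := by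
    obtain ⟨q, hq⟩ := CharP.exists F
    have hqp : q.Prime := @CharP.char_is_prime F _ _ _ _ q hq
    obtain ⟨k, _, hk⟩ := @FiniteField.card F _ _ q hq
    have hqdvd : q ∣ p ^ m := by
      rw [← hF, hk]
      exact dvd_pow_self q k.ne_zero
    have : q = p := (Nat.prime_dvd_prime_iff_eq hqp hp).mp (hqp.dvd_of_dvd_pow hqdvd)
    rwa [this] at hq
  haveI := hchar
  -- basic computation lemmas
  have hscal : ∀ (s : F) (x : F × F × F × F),
      algebraMap F R s * stdForm F R u v x =
        stdForm F R u v (s * x.1, s * x.2.1, s * x.2.2.1, s * x.2.2.2) := by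
    intro s x
    simp only [stdForm, map_mul]
    ring
  have hθΨ : ∀ (r : R) (j : Fin 4), Ψ (θ r) j = (Ψ r j) ^ p ^ t := by
    intro r j
    obtain ⟨⟨a, b, c, d⟩, rfl⟩ := hbij.2 r
    rw [hθ, hΨ, hΨ]
    fin_cases j <;> simp [add_pow_char_pow]
  have hsΨ : ∀ (s : F) (r : R) (j : Fin 4),
      Ψ (algebraMap F R s * r) j = s * Ψ r j := by
    intro s r j
    obtain ⟨⟨a, b, c, d⟩, rfl⟩ := hbij.2 r
    rw [hscal, hΨ, hΨ]
    fin_cases j <;> simp <;> ring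
  have h1 : ∀ x : Fin n → R,
      grayV Ψ (skewConstaShift θ (algebraMap F R α) x) = quasiTwist4 p t α (grayV Ψ x) := by
    intro x
    funext ji
    obtain ⟨j, i⟩ := ji
    simp only [grayV, skewConstaShift, quasiTwist4]
    by_cases hi : i = 0
    · simp only [hi, if_true, eq_self_iff_true]
      rw [hsΨ, hθΨ]
    · simp only [if_neg hi, one_mul, hθΨ]
  refine ⟨h1, ?_⟩
  -- injectivity of Ψ and grayV
  have hΨinj : Function.Injective Ψ := by
    intro r r' h
    obtain ⟨⟨a, b, c, d⟩, rfl⟩ := hbij.2 r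
    obtain ⟨⟨a', b', c', d'⟩, rfl⟩ := hbij.2 r'
    rw [hΨ, hΨ] at h
    apply congrArg
    have h0 := congrFun h 0
    have h1' := congrFun h 1
    have h2 := congrFun h 2
    have h3 := congrFun h 3
    simp only [Matrix.cons_val_zero, Matrix.cons_val_one, Matrix.head_cons,
      Matrix.cons_val_two, Matrix.tail_cons, Matrix.cons_val_three] at h0 h1' h2 h3
    have ha : a = a' := h0
    have hb : b = b' := by
      have := h1'; rw [ha] at this; exact add_left_cancel this
    have hc : c = c' := by
      have := h2; rw [ha] at this; exact add_left_cancel this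
    have hd : d = d' := by
      have := h3; rw [ha, hb, hc] at this; exact add_left_cancel this
    rw [ha, hb, hc, hd]
  have hginj : Function.Injective (grayV Ψ (n := n)) := by
    intro x x' h
    funext i
    apply hΨinj
    funext j
    exact congrFun h (j, i)
  intro C
  have himg : quasiTwist4 p t α '' (grayV Ψ '' (C : Set (Fin n → R))) =
      grayV Ψ '' (skewConstaShift θ (algebraMap F R α) '' (C : Set (Fin n → R))) := by
    rw [← Set.image_comp, ← Set.image_comp]
    exact Set.image_congr' (fun x => (h1 x).symm)
  rw [himg, Set.image_eq_image hginj]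
end

section
/- Suppose gcd(n,k) = 1 and gcd(n,q) = 1, where k is the order of θ_t. If C = e₁C₁ ⊕ e₂C₂ ⊕ e₃C₃ ⊕ e₄C₄ is a skew cyclic code of length n over R such that each Cᵢ has an idempotent generator eᵢ(x) in F_q[x;θ_t]/⟨xⁿ-1⟩, then e(x) = e₁e₁(x)+e₂e₂(x)+e₃e₃(x)+e₄e₄(x) is an idempotent element of R[x;θ_t]/⟨xⁿ-1⟩ generating C as a left module. -/
open Polynomial

/-- The polynomial of degree `< n` with coefficient vector `c`. -/
noncomputable def toPoly {S : Type*} [CommRing S] {n : ℕ} (c : Fin n → S) : Polynomial S :=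
  ∑ i : Fin n, Polynomial.C (c i) * Polynomial.X ^ (i : ℕ)

/-- Multiplication in the quotient `S[x;θ]/⟨xⁿ-1⟩`, on canonical representatives. -/
noncomputable def quotMul {S : Type*} [CommRing S] (θ : S → S) {n : ℕ} [NeZero n]
    (c d : Fin n → S) : Fin n → S :=
  redMod n (skewMul θ (toPoly c) (toPoly d))

/-- The skew cyclic code (left submodule of `S[x;θ]/⟨xⁿ-1⟩`) generated by the element
with coefficient vector `g`. -/
noncomputable def skewGenV {S : Type*} [CommRing S] (θ : S → S) {n : ℕ} [NeZero n]
    (g : Fin n → S) : Set (Fin n → S) :=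
  {c | ∃ h : Polynomial S, c = redMod n (skewMul θ h (toPoly g))}

section SkewMapLemmas

lemma iterComm {S S' : Type*} (χ : S → S') (θ : S → S) (θ' : S' → S')
    (h : ∀ s, χ (θ s) = θ' (χ s)) (i : ℕ) (s : S) : χ (θ^[i] s) = θ'^[i] (χ s) := by
  induction i generalizing s with
  | zero => rfl
  | succ k ih =>
    rw [Function.iterate_succ_apply, Function.iterate_succ_apply, ih, h]

lemma iterZero {S : Type*} [Zero S] (θ : S → S) (h : θ 0 = 0) (i : ℕ) : θ^[i] (0 : S) = 0 := by
  induction i with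
  | zero => rfl
  | succ k ih => rw [Function.iterate_succ_apply, h, ih]

lemma map_skewMul {S S' : Type*} [CommRing S] [CommRing S'] (χ : S →+* S')
    (θ : S → S) (θ' : S' → S') (hc : ∀ s, χ (θ s) = θ' (χ s)) (h0 : θ' 0 = 0)
    (f g : Polynomial S) :
    (skewMul θ f g).map χ = skewMul θ' (f.map χ) (g.map χ) := by
  have h2 : ∀ i : ℕ,
      (∑ j ∈ (g.map χ).support,
        Polynomial.C ((f.map χ).coeff i * θ'^[i] ((g.map χ).coeff j)) * Polynomial.X ^ (i + j))
      = ∑ j ∈ g.support,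
        Polynomial.C ((f.map χ).coeff i * θ'^[i] ((g.map χ).coeff j)) * Polynomial.X ^ (i + j) := by
    intro i
    apply Finset.sum_subset (Polynomial.support_map_subset χ g)
    intro j _ hj
    rw [Polynomial.notMem_support_iff.mp hj, iterZero θ' h0, mul_zero, map_zero, zero_mul]
  have h1 : skewMul θ' (f.map χ) (g.map χ)
      = ∑ i ∈ f.support, ∑ j ∈ g.support,
          Polynomial.C ((f.map χ).coeff i * θ'^[i] ((g.map χ).coeff j)) * Polynomial.X ^ (i + j) := by
    unfold skewMul
    rw [Finset.sum_subset (Polynomial.support_map_subset χ f)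
      (fun i _ hi => Finset.sum_eq_zero
        (fun j _ => by rw [Polynomial.notMem_support_iff.mp hi, zero_mul, map_zero, zero_mul]))]
    exact Finset.sum_congr rfl fun i _ => h2 i
  rw [h1]
  unfold skewMul
  rw [Polynomial.map_sum]
  refine Finset.sum_congr rfl fun i _ => ?_
  rw [Polynomial.map_sum]
  refine Finset.sum_congr rfl fun j _ => ?_
  rw [Polynomial.map_mul, Polynomial.map_pow, Polynomial.map_X, Polynomial.map_C, map_mul,
    iterComm χ θ θ' hc, Polynomial.coeff_map, Polynomial.coeff_map]

lemma map_redMod {S S' : Type*} [CommRing S] [CommRing S'] (χ : S →+* S') (n : ℕ) [NeZero n]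
    (f : Polynomial S) (i : Fin n) : redMod n (f.map χ) i = χ (redMod n f i) := by
  unfold redMod
  rw [map_sum]
  rw [Finset.sum_subset
    (Finset.filter_subset_filter _ (Polynomial.support_map_subset χ f))
    (fun j hj hnj => Polynomial.notMem_support_iff.mp
      (fun hs => hnj (Finset.mem_filter.mpr ⟨hs, (Finset.mem_filter.mp hj).2⟩)))]
  exact Finset.sum_congr rfl fun j _ => Polynomial.coeff_map χ j

lemma map_toPoly {S S' : Type*} [CommRing S] [CommRing S'] (χ : S →+* S') {n : ℕ}
    (c : Fin n → S) : (toPoly c).map χ = toPoly (fun i => χ (c i)) := by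
  unfold toPoly
  rw [Polynomial.map_sum]
  refine Finset.sum_congr rfl fun i _ => ?_
  rw [Polynomial.map_mul, Polynomial.map_pow, Polynomial.map_X, Polynomial.map_C]

lemma map_redSkew {S S' : Type*} [CommRing S] [CommRing S'] (χ : S →+* S')
    (θ : S → S) (θ' : S' → S') (hc : ∀ s, χ (θ s) = θ' (χ s)) (h0 : θ' 0 = 0)
    {n : ℕ} [NeZero n] (h : Polynomial S) (c : Fin n → S) (i : Fin n) :
    χ (redMod n (skewMul θ h (toPoly c)) i)
      = redMod n (skewMul θ' (h.map χ) (toPoly (fun j => χ (c j)))) i := by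
  rw [← map_toPoly, ← map_skewMul χ θ θ' hc h0, map_redMod]

lemma map_quotMul {S S' : Type*} [CommRing S] [CommRing S'] (χ : S →+* S')
    (θ : S → S) (θ' : S' → S') (hc : ∀ s, χ (θ s) = θ' (χ s)) (h0 : θ' 0 = 0)
    {n : ℕ} [NeZero n] (c d : Fin n → S) (i : Fin n) :
    χ (quotMul θ c d i) = quotMul θ' (fun j => χ (c j)) (fun j => χ (d j)) i := by
  unfold quotMul
  rw [← map_redMod, map_skewMul χ θ θ' hc h0, map_toPoly, map_toPoly]

end SkewMapLemmas

section PsiSection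

variable {F R : Type*} [Field F] [CommRing R] [Algebra F R]

/-- The element `e₁ a + e₂ b + e₃ c + e₄ d` in the idempotent basis. -/
def psi (u v : R) (x : F × F × F × F) : R :=
  (1 - u - v + u * v) * algebraMap F R x.1 + (u - u * v) * algebraMap F R x.2.1
    + (v - u * v) * algebraMap F R x.2.2.1 + u * v * algebraMap F R x.2.2.2

lemma key_mul {R : Type*} [CommRing R] (u v A1 A2 A3 A4 B1 B2 B3 B4 : R)
    (hu : u * u = u) (hv : v * v = v) :
    (1 - u - v + u * v) * (A1 * B1) + (u - u * v) * (A2 * B2) + (v - u * v) * (A3 * B3)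
        + u * v * (A4 * B4)
      = ((1 - u - v + u * v) * A1 + (u - u * v) * A2 + (v - u * v) * A3 + u * v * A4)
        * ((1 - u - v + u * v) * B1 + (u - u * v) * B2 + (v - u * v) * B3 + u * v * B4) := by
  linear_combination ((-1) * (A2*B2) + (1) * (A2*B1) + (1) * (A1*B2) + (-1) * (A1*B1) + (-1) * (v*A4*B2) + (1) * (v*A4*B1) + (1) * (v*A3*B2) + (-1) * (v*A3*B1) + (-1) * (v*A2*B4) + (1) * (v*A2*B3) + (2) * (v*A2*B2) + (-2) * (v*A2*B1) + (1) * (v*A1*B4) + (-1) * (v*A1*B3) + (-2) * (v*A1*B2) + (2) * (v*A1*B1) + (-1) * (v*v*A4*B4) + (1) * (v*v*A4*B3) + (1) * (v*v*A4*B2) + (-1) * (v*v*A4*B1) + (1) * (v*v*A3*B4) + (-1) * (v*v*A3*B3) + (-1) * (v*v*A3*B2) + (1) * (v*v*A3*B1) + (1) * (v*v*A2*B4) + (-1) * (v*v*A2*B3) + (-1) * (v*v*A2*B2) + (1) * (v*v*A2*B1) + (-1) * (v*v*A1*B4) + (1) * (v*v*A1*B3) + (1) * (v*v*A1*B2) +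 (-1) * (v*v*A1*B1)) * hu
    + ((-1) * (A3*B3) + (1) * (A3*B1) + (1) * (A1*B3) + (-1) * (A1*B1) + (-1) * (u*A4*B4) + (1) * (u*A4*B2) + (1) * (u*A3*B3) + (-1) * (u*A3*B1) + (1) * (u*A2*B4) + (-1) * (u*A2*B2) + (-1) * (u*A1*B3) + (1) * (u*A1*B1)) * hv

lemma psi_mul (u v : R) (hu : u * u = u) (hv : v * v = v) (x y : F × F × F × F) :
    psi u v (x * y) = psi u v x * psi u v y := by
  obtain ⟨a1, a2, a3, a4⟩ := x
  obtain ⟨b1, b2, b3, b4⟩ := y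
  simp only [psi, Prod.mk_mul_mk, map_mul]
  exact key_mul u v _ _ _ _ _ _ _ _ hu hv

lemma psi_add (u v : R) (x y : F × F × F × F) :
    psi u v (x + y) = psi u v x + psi u v y := by
  obtain ⟨a1, a2, a3, a4⟩ := x
  obtain ⟨b1, b2, b3, b4⟩ := y
  simp only [psi, Prod.mk_add_mk, map_add]
  ring

lemma psi_one (u v : R) : psi u v (1 : F × F × F × F) = 1 := by
  simp only [psi, Prod.fst_one, Prod.snd_one, map_one, mul_one]
  ring

lemma psi_zero (u v : R) : psi u v (0 : F × F × F × F) = 0 := by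
  simp [psi]

lemma psi_diag (u v : R) (a : F) : psi u v (a, a, a, a) = algebraMap F R a := by
  simp only [psi]
  ring

/-- The linear change of coordinates between the idempotent basis and the standard basis. -/
def Lequiv (F : Type*) [Field F] : (F × F × F × F) ≃ (F × F × F × F) where
  toFun x := (x.1, x.2.1 - x.1, x.2.2.1 - x.1, x.1 - x.2.1 - x.2.2.1 + x.2.2.2)
  invFun y := (y.1, y.1 + y.2.1, y.1 + y.2.2.1, y.1 + y.2.1 + y.2.2.1 + y.2.2.2)
  left_inv x := by
    obtain ⟨a, b, c, d⟩ := x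
    exact Prod.ext rfl (Prod.ext (by ring) (Prod.ext (by ring) (by ring)))
  right_inv y := by
    obtain ⟨a, b, c, d⟩ := y
    exact Prod.ext rfl (Prod.ext (by ring) (Prod.ext (by ring) (by ring)))

lemma psi_eq_stdForm_comp (u v : R) :
    (psi u v : F × F × F × F → R) = stdForm F R u v ∘ (Lequiv F) := by
  funext x
  obtain ⟨a, b, c, d⟩ := x
  simp only [psi, stdForm, Function.comp_apply, Lequiv, Equiv.coe_fn_mk, map_sub, map_add]
  ring

lemma psi_stdForm (u v : R) (a b c d : F) :
    psi u v (a, b, c, d) = stdForm F R u v (a, b - a, c - a, a - b - c + d) := by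
  simp only [psi, stdForm, map_sub, map_add]
  ring

lemma psi_bijective (u v : R) (hbij : Function.Bijective (stdForm F R u v)) :
    Function.Bijective (psi u v : F × F × F × F → R) := by
  rw [psi_eq_stdForm_comp]
  exact hbij.comp (Lequiv F).bijective

/-- Projections `F⁴ → F` as ring homs. -/
def proj4 (F : Type*) [Field F] : Fin 4 → ((F × F × F × F) →+* F)
  | 0 => RingHom.fst F (F × F × F)
  | 1 => (RingHom.fst F (F × F)).comp (RingHom.snd F (F × F × F))
  | 2 => ((RingHom.fst F F).comp (RingHom.snd F (F × F))).comp (RingHom.snd F (F × F × F))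
  | 3 => ((RingHom.snd F F).comp (RingHom.snd F (F × F))).comp (RingHom.snd F (F × F × F))

/-- The ring-hom projection of `R` onto one coordinate in the idempotent basis. -/
noncomputable def chiHom (u v : R) (hu : u * u = u) (hv : v * v = v)
    (hbij : Function.Bijective (stdForm F R u v)) (π : (F × F × F × F) →+* F) : R →+* F where
  toFun r := π ((Equiv.ofBijective _ (psi_bijective u v hbij)).symm r)
  map_one' := by
    show π ((Equiv.ofBijective _ (psi_bijective u v hbij)).symm (1 : R)) = 1
    rw [show (Equiv.ofBijective _ (psi_bijective u v hbij)).symm (1 : R) = 1 from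
      (Equiv.symm_apply_eq _).mpr (psi_one u v).symm, map_one]
  map_zero' := by
    show π ((Equiv.ofBijective _ (psi_bijective u v hbij)).symm (0 : R)) = 0
    rw [show (Equiv.ofBijective _ (psi_bijective u v hbij)).symm (0 : R) = 0 from
      (Equiv.symm_apply_eq _).mpr (psi_zero u v).symm, map_zero]
  map_mul' r s := by
    show π ((Equiv.ofBijective _ (psi_bijective u v hbij)).symm (r * s))
      = π ((Equiv.ofBijective _ (psi_bijective u v hbij)).symm r)
        * π ((Equiv.ofBijective _ (psi_bijective u v hbij)).symm s)
    set e := Equiv.ofBijective _ (psi_bijective u v hbij) with he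
    have h : e.symm (r * s) = e.symm r * e.symm s := by
      rw [Equiv.symm_apply_eq]
      show r * s = psi u v (e.symm r * e.symm s)
      rw [psi_mul u v hu hv]
      have h1 : psi u v (e.symm r) = r := e.apply_symm_apply r
      have h2 : psi u v (e.symm s) = s := e.apply_symm_apply s
      rw [h1, h2]
    rw [h, map_mul]
  map_add' r s := by
    show π ((Equiv.ofBijective _ (psi_bijective u v hbij)).symm (r + s))
      = π ((Equiv.ofBijective _ (psi_bijective u v hbij)).symm r)
        + π ((Equiv.ofBijective _ (psi_bijective u v hbij)).symm s)
    set e := Equiv.ofBijective _ (psi_bijective u v hbij) with he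
    have h : e.symm (r + s) = e.symm r + e.symm s := by
      rw [Equiv.symm_apply_eq]
      show r + s = psi u v (e.symm r + e.symm s)
      rw [psi_add u v]
      have h1 : psi u v (e.symm r) = r := e.apply_symm_apply r
      have h2 : psi u v (e.symm s) = s := e.apply_symm_apply s
      rw [h1, h2]
    rw [h, map_add]

lemma chiHom_psi (u v : R) (hu : u * u = u) (hv : v * v = v)
    (hbij : Function.Bijective (stdForm F R u v)) (π : (F × F × F × F) →+* F)
    (x : F × F × F × F) : chiHom u v hu hv hbij π (psi u v x) = π x := by
  show π ((Equiv.ofBijective _ (psi_bijective u v hbij)).symm (psi u v x)) = π x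
  congr 1
  exact (Equiv.ofBijective _ (psi_bijective u v hbij)).symm_apply_apply x

lemma eq_of_chiHom (u v : R) (hu : u * u = u) (hv : v * v = v)
    (hbij : Function.Bijective (stdForm F R u v)) (r s : R)
    (h : ∀ j : Fin 4, chiHom u v hu hv hbij (proj4 F j) r
      = chiHom u v hu hv hbij (proj4 F j) s) : r = s := by
  set e := Equiv.ofBijective _ (psi_bijective u v hbij) with he
  have h0 := h 0; have h1 := h 1; have h2 := h 2; have h3 := h 3
  have hsymm : e.symm r = e.symm s :=
    Prod.ext h0 (Prod.ext h1 (Prod.ext h2 h3))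
  exact e.symm.injective hsymm

end PsiSection

theorem stmt19 (p m t : ℕ) (hp : p.Prime) (hodd : p ≠ 2) (ht : 0 < t) (htm : t ∣ m)
    (F : Type*) [Field F] [Fintype F] (hF : Fintype.card F = p ^ m)
    (R : Type*) [CommRing R] [Algebra F R] (u v : R)
    (hu : u * u = u) (hv : v * v = v)
    (hbij : Function.Bijective (stdForm F R u v))
    (θ : R → R)
    (hθ : ∀ a b c d : F, θ (stdForm F R u v (a, b, c, d)) =
      stdForm F R u v (a ^ p ^ t, b ^ p ^ t, c ^ p ^ t, d ^ p ^ t))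
    (n : ℕ) [NeZero n]
    -- gcd(n, k) = 1 where k = m / t is the order of θ, and gcd(n, q) = 1
    (hgcdk : Nat.gcd n (m / t) = 1) (hgcdq : Nat.gcd n (p ^ m) = 1)
    (C : Submodule R (Fin n → R)) (C₁ C₂ C₃ C₄ : Submodule F (Fin n → F))
    (hC : (C : Set (Fin n → R)) = combSet F R u v (C₁ : Set (Fin n → F)) C₂ C₃ C₄)
    (hskew : skewShift θ '' (C : Set (Fin n → R)) = C)
    -- idempotent generators of C₁,...,C₄ in F_q[x;θ_t]/⟨xⁿ-1⟩
    (g₁ g₂ g₃ g₄ : Fin n → F)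
    (hid₁ : quotMul (· ^ p ^ t) g₁ g₁ = g₁) (hid₂ : quotMul (· ^ p ^ t) g₂ g₂ = g₂)
    (hid₃ : quotMul (· ^ p ^ t) g₃ g₃ = g₃) (hid₄ : quotMul (· ^ p ^ t) g₄ g₄ = g₄)
    (hgen₁ : (C₁ : Set (Fin n → F)) = skewGenV (· ^ p ^ t) g₁)
    (hgen₂ : (C₂ : Set (Fin n → F)) = skewGenV (· ^ p ^ t) g₂)
    (hgen₃ : (C₃ : Set (Fin n → F)) = skewGenV (· ^ p ^ t) g₃)
    (hgen₄ : (C₄ : Set (Fin n → F)) = skewGenV (· ^ p ^ t) g₄) :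
    let E : Fin n → R := fun i =>
      (1 - u - v + u * v) * algebraMap F R (g₁ i) + (u - u * v) * algebraMap F R (g₂ i)
        + (v - u * v) * algebraMap F R (g₃ i) + u * v * algebraMap F R (g₄ i)
    -- E is an idempotent of R[x;θ]/⟨xⁿ-1⟩ generating C
    quotMul θ E E = E ∧ (C : Set (Fin n → R)) = skewGenV θ E := by
  intro E
  haveI : Fact p.Prime := ⟨hp⟩
  haveI hCharP : CharP F p := by
    have hm : m ≠ 0 := by
      rintro rfl
      rw [pow_zero] at hF
      exact absurd hF Fintype.one_lt_card.ne'
    have h0 : ((p ^ m : ℕ) : F) = 0 := by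
      rw [← hF]; exact FiniteField.cast_card_eq_zero F
    have hdvd : ringChar F ∣ p ^ m := (ringChar.spec F (p ^ m)).mp h0
    have hrp : ringChar F = p := by
      rcases CharP.char_is_prime_or_zero F (ringChar F) with hpr | hzero
      · exact (Nat.prime_dvd_prime_iff_eq hpr hp).mp (hpr.dvd_of_dvd_pow hdvd)
      · rw [hzero] at hdvd
        exact absurd (Nat.eq_zero_of_zero_dvd hdvd) (pow_ne_zero m hp.ne_zero)
    exact ringChar.of_eq hrp
  have hq0 : (fun a : F => a ^ p ^ t) 0 = 0 := zero_pow (pow_ne_zero t hp.ne_zero)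
  -- θ acts as the Frobenius on the idempotent coordinates
  have htheta_psi : ∀ a b c d : F,
      θ (psi u v (a, b, c, d)) = psi u v (a ^ p ^ t, b ^ p ^ t, c ^ p ^ t, d ^ p ^ t) := by
    intro a b c d
    have hadd : ∀ x y : F, (x + y) ^ p ^ t = x ^ p ^ t + y ^ p ^ t := fun x y =>
      add_pow_char_pow ..
    have hsub : ∀ x y : F, (x - y) ^ p ^ t = x ^ p ^ t - y ^ p ^ t := fun x y =>
      sub_pow_char_pow ..
    rw [psi_stdForm, hθ, psi_stdForm, hsub b a, hsub c a, hadd (a - b - c) d,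
      hsub (a - b) c, hsub a b]
  -- the four coordinate ring homomorphisms commute with θ
  have hcomm : ∀ (j : Fin 4) (r : R),
      chiHom u v hu hv hbij (proj4 F j) (θ r)
        = chiHom u v hu hv hbij (proj4 F j) r ^ p ^ t := by
    intro j r
    obtain ⟨x, rfl⟩ := (psi_bijective u v hbij).surjective r
    obtain ⟨a, b, c, d⟩ := x
    rw [htheta_psi, chiHom_psi, chiHom_psi]
    fin_cases j <;> rfl
  have hchialg : ∀ (j : Fin 4) (a : F),
      chiHom u v hu hv hbij (proj4 F j) (algebraMap F R a) = a := by
    intro j a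
    rw [← psi_diag u v a, chiHom_psi]
    fin_cases j <;> rfl
  have hmapalg : ∀ (j : Fin 4) (h : Polynomial F),
      (h.map (algebraMap F R)).map (chiHom u v hu hv hbij (proj4 F j)) = h := by
    intro j h
    rw [Polynomial.map_map,
      show (chiHom u v hu hv hbij (proj4 F j)).comp (algebraMap F R) = RingHom.id F from
        RingHom.ext fun a => hchialg j a,
      Polynomial.map_id]
  have hE : ∀ i, E i = psi u v (g₁ i, g₂ i, g₃ i, g₄ i) := fun i => rfl
  have hchiE : ∀ (j : Fin 4) (i : Fin n),
      chiHom u v hu hv hbij (proj4 F j) (E i) = proj4 F j (g₁ i, g₂ i, g₃ i, g₄ i) := by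
    intro j i
    rw [hE i, chiHom_psi]
  -- idempotent-coordinate values of the four basis idempotents
  have he1 : (1 - u - v + u * v : R) = psi u v ((1 : F), 0, 0, 0) := by simp [psi]
  have he2 : (u - u * v : R) = psi u v ((0 : F), 1, 0, 0) := by simp [psi]
  have he3 : (v - u * v : R) = psi u v ((0 : F), 0, 1, 0) := by simp [psi]
  have he4 : (u * v : R) = psi u v ((0 : F), 0, 0, 1) := by simp [psi]
  -- part 1 : idempotency
  have main : ∀ (j : Fin 4) (gg : Fin n → F),
      (∀ i, chiHom u v hu hv hbij (proj4 F j) (E i) = gg i) →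
      quotMul (· ^ p ^ t) gg gg = gg →
      ∀ i, chiHom u v hu hv hbij (proj4 F j) (quotMul θ E E i)
        = chiHom u v hu hv hbij (proj4 F j) (E i) := by
    intro j gg hE' hidg i
    rw [map_quotMul (chiHom u v hu hv hbij (proj4 F j)) θ (· ^ p ^ t) (hcomm j) hq0 E E i,
      show (fun l => chiHom u v hu hv hbij (proj4 F j) (E l)) = gg from funext hE',
      hidg, hE' i]
  have hidem : quotMul θ E E = E := by
    funext i
    apply eq_of_chiHom u v hu hv hbij
    intro j
    fin_cases j
    · exact main 0 g₁ (fun i => hchiE 0 i) hid₁ i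
    · exact main 1 g₂ (fun i => hchiE 1 i) hid₂ i
    · exact main 2 g₃ (fun i => hchiE 2 i) hid₃ i
    · exact main 3 g₄ (fun i => hchiE 3 i) hid₄ i
  refine ⟨hidem, ?_⟩
  -- part 2 : generation
  have hEtoPoly : ∀ (j : Fin 4) (gg : Fin n → F),
      (∀ i, chiHom u v hu hv hbij (proj4 F j) (E i) = gg i) →
      (fun l => chiHom u v hu hv hbij (proj4 F j) (E l)) = gg := fun j gg h => funext h
  ext x
  rw [hC]
  constructor
  · rintro ⟨a, ha, b, hb, c, hcc, d, hd, rfl⟩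
    rw [hgen₁] at ha; rw [hgen₂] at hb; rw [hgen₃] at hcc; rw [hgen₄] at hd
    obtain ⟨h₁, ha⟩ := ha
    obtain ⟨h₂, hb⟩ := hb
    obtain ⟨h₃, hcc⟩ := hcc
    obtain ⟨h₄, hd⟩ := hd
    refine ⟨Polynomial.C (1 - u - v + u * v) * h₁.map (algebraMap F R)
      + Polynomial.C (u - u * v) * h₂.map (algebraMap F R)
      + Polynomial.C (v - u * v) * h₃.map (algebraMap F R)
      + Polynomial.C (u * v) * h₄.map (algebraMap F R), ?_⟩
    funext i
    apply eq_of_chiHom u v hu hv hbij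
    intro j
    rw [map_redSkew (chiHom u v hu hv hbij (proj4 F j)) θ (· ^ p ^ t) (hcomm j) hq0]
    rw [Polynomial.map_add, Polynomial.map_add, Polynomial.map_add,
      Polynomial.map_mul, Polynomial.map_mul, Polynomial.map_mul, Polynomial.map_mul,
      Polynomial.map_C, Polynomial.map_C, Polynomial.map_C, Polynomial.map_C,
      hmapalg j h₁, hmapalg j h₂, hmapalg j h₃, hmapalg j h₄]
    have hx : (1 - u - v + u * v) * algebraMap F R (a i)
        + (u - u * v) * algebraMap F R (b i) + (v - u * v) * algebraMap F R (c i)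
        + u * v * algebraMap F R (d i) = psi u v (a i, b i, c i, d i) := rfl
    rw [hx, he1, he2, he3, he4, chiHom_psi, chiHom_psi, chiHom_psi, chiHom_psi, chiHom_psi,
      show (fun l => chiHom u v hu hv hbij (proj4 F j) (E l))
        = (fun l => proj4 F j (g₁ l, g₂ l, g₃ l, g₄ l)) from funext fun l => hchiE j l]
    fin_cases j
    · show a i = redMod n (skewMul (· ^ p ^ t)
        (Polynomial.C 1 * h₁ + Polynomial.C 0 * h₂ + Polynomial.C 0 * h₃
          + Polynomial.C 0 * h₄) (toPoly g₁)) i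
      rw [map_one, map_zero, one_mul, zero_mul, zero_mul, zero_mul, add_zero, add_zero,
        add_zero]
      exact congrFun ha i
    · show b i = redMod n (skewMul (· ^ p ^ t)
        (Polynomial.C 0 * h₁ + Polynomial.C 1 * h₂ + Polynomial.C 0 * h₃
          + Polynomial.C 0 * h₄) (toPoly g₂)) i
      rw [map_one, map_zero, one_mul, zero_mul, zero_mul, zero_mul, add_zero, add_zero,
        zero_add]
      exact congrFun hb i
    · show c i = redMod n (skewMul (· ^ p ^ t)
        (Polynomial.C 0 * h₁ + Polynomial.C 0 * h₂ + Polynomial.C 1 * h₃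
          + Polynomial.C 0 * h₄) (toPoly g₃)) i
      rw [map_one, map_zero, one_mul, zero_mul, zero_mul, zero_mul, add_zero, zero_add,
        zero_add]
      exact congrFun hcc i
    · show d i = redMod n (skewMul (· ^ p ^ t)
        (Polynomial.C 0 * h₁ + Polynomial.C 0 * h₂ + Polynomial.C 0 * h₃
          + Polynomial.C 1 * h₄) (toPoly g₄)) i
      rw [map_one, map_zero, one_mul, zero_mul, zero_mul, zero_mul, zero_add, zero_add,
        zero_add]
      exact congrFun hd i
  · rintro ⟨h, rfl⟩
    have hmem : ∀ (j : Fin 4) (gg : Fin n → F),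
        (∀ i, chiHom u v hu hv hbij (proj4 F j) (E i) = gg i) →
        (fun i => chiHom u v hu hv hbij (proj4 F j)
          (redMod n (skewMul θ h (toPoly E)) i)) ∈ skewGenV (· ^ p ^ t) gg := by
      intro j gg hgE
      refine ⟨h.map (chiHom u v hu hv hbij (proj4 F j)), ?_⟩
      funext i
      rw [map_redSkew (chiHom u v hu hv hbij (proj4 F j)) θ (· ^ p ^ t) (hcomm j) hq0,
        show (fun l => chiHom u v hu hv hbij (proj4 F j) (E l)) = gg from funext hgE]
    refine ⟨fun i => chiHom u v hu hv hbij (proj4 F 0)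
        (redMod n (skewMul θ h (toPoly E)) i), ?_,
      fun i => chiHom u v hu hv hbij (proj4 F 1)
        (redMod n (skewMul θ h (toPoly E)) i), ?_,
      fun i => chiHom u v hu hv hbij (proj4 F 2)
        (redMod n (skewMul θ h (toPoly E)) i), ?_,
      fun i => chiHom u v hu hv hbij (proj4 F 3)
        (redMod n (skewMul θ h (toPoly E)) i), ?_, ?_⟩
    · rw [hgen₁]; exact hmem 0 g₁ (fun i => hchiE 0 i)
    · rw [hgen₂]; exact hmem 1 g₂ (fun i => hchiE 1 i)
    · rw [hgen₃]; exact hmem 2 g₃ (fun i => hchiE 2 i)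
    · rw [hgen₄]; exact hmem 3 g₄ (fun i => hchiE 3 i)
    · funext i
      apply eq_of_chiHom u v hu hv hbij
      intro j
      have hx : (1 - u - v + u * v) * algebraMap F R
            (chiHom u v hu hv hbij (proj4 F 0) (redMod n (skewMul θ h (toPoly E)) i))
          + (u - u * v) * algebraMap F R
            (chiHom u v hu hv hbij (proj4 F 1) (redMod n (skewMul θ h (toPoly E)) i))
          + (v - u * v) * algebraMap F R
            (chiHom u v hu hv hbij (proj4 F 2) (redMod n (skewMul θ h (toPoly E)) i))
          + u * v * algebraMap F R
            (chiHom u v hu hv hbij (proj4 F 3) (redMod n (skewMul θ h (toPoly E)) i))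
          = psi u v
            (chiHom u v hu hv hbij (proj4 F 0) (redMod n (skewMul θ h (toPoly E)) i),
             chiHom u v hu hv hbij (proj4 F 1) (redMod n (skewMul θ h (toPoly E)) i),
             chiHom u v hu hv hbij (proj4 F 2) (redMod n (skewMul θ h (toPoly E)) i),
             chiHom u v hu hv hbij (proj4 F 3) (redMod n (skewMul θ h (toPoly E)) i)) := rfl
      rw [hx, chiHom_psi]
      fin_cases j <;> rfl
end
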